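/- arXiv:2403.06726 — 3 statements merged into one kernel-verified Lean document; each statement's English description precedes it below -/
import Mathlib

section
/- Let p ≥ 1, K ≥ 1, τ > 0, and let π_1, …, π_K be positive reals with Σ_j π_j = 1. For each class j ∈ {1,…,K} let ν_j be a Borel probability measure on the unit sphere S^{p-1} of ℝ^p and let (Z_{j,a})_{a≥1} be i.i.d. with distribution ν_j, with the sequences independent across j. Fix a unit vector z ∈ S^{p-1} and a class y ∈ {1,…,K}. For each N, let N_1(N), …, N_K(N) be positive integers with Σ_j N_j(N) = N and N_j(N)/N → π_j as N → ∞. Define L_N = -(1/(τ · N_y(N))) Σ_{a=1}^{N_y(N)} ⟨z, Z_{y,a}⟩ + log( Σ_{j=1}^{K} Σ_{a=1}^{N_j(N)} exp(⟨z, Z_{j,a}⟩/τ) ). Then almost surely, L_N − log N converges as N → ∞ to L_out := -(1/τ)⟨z, ∫ w dν_y(w)⟩ + log( Σ_{j=1}^{K} π_j ∫ exp(⟨z, w⟩/τ) dν_j(w) ). -/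
open scoped RealInnerProductSpace BigOperators
open MeasureTheory ProbabilityTheory Filter
open Topology

lemma slln_helper {Ω E : Type*} [MeasurableSpace Ω] [MeasurableSpace E]
    [TopologicalSpace E] [BorelSpace E]
    (μ : Measure Ω) [IsProbabilityMeasure μ]
    (ν : Measure E) [IsProbabilityMeasure ν]
    (X : ℕ → Ω → E) (hXmeas : ∀ a, Measurable (X a))
    (hXind : Pairwise fun a b => IndepFun (X a) (X b) μ)
    (hXid : ∀ a, Measure.map (X a) μ = ν)
    (f : E → ℝ) (hf : Continuous f) (hint : Integrable f ν) :
    ∀ᵐ ω ∂μ, Tendsto (fun n : ℕ => (n : ℝ)⁻¹ * ∑ a ∈ Finset.range n, f (X a ω))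
      atTop (𝓝 (∫ w, f w ∂ν)) := by
  have hY : ∀ a, Integrable (f ∘ X a) μ := by
    intro a
    have := (integrable_map_measure hf.aestronglyMeasurable
      (hXmeas a).aemeasurable (μ := μ)).mp
    rw [hXid a] at this
    exact this hint
  have hE : μ[f ∘ X 0] = ∫ w, f w ∂ν := by
    rw [← hXid 0, integral_map (hXmeas 0).aemeasurable hf.aestronglyMeasurable]
    rfl
  have := strong_law_ae (fun a => f ∘ X a) (hY 0)
    (fun a b hab => (hXind hab).comp hf.measurable hf.measurable)
    (fun a => IdentDistrib.comp ⟨(hXmeas a).aemeasurable, (hXmeas 0).aemeasurable,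
      by rw [hXid a, hXid 0]⟩ hf.measurable)
  rw [hE] at this
  filter_upwards [this] with ω hω
  simpa [smul_eq_mul, Function.comp] using hω

theorem stmt_2 (p K : ℕ) (hp : 1 ≤ p) (hK : 1 ≤ K) (τ : ℝ) (hτ : 0 < τ)
    (π : Fin K → ℝ) (hπpos : ∀ j, 0 < π j) (hπsum : ∑ j, π j = 1)
    (ν : Fin K → Measure (EuclideanSpace ℝ (Fin p)))
    [∀ j, IsProbabilityMeasure (ν j)]
    (hν : ∀ j, ∀ᵐ w ∂(ν j), ‖w‖ = 1)
    {Ω : Type*} [MeasurableSpace Ω] (μ : Measure Ω) [IsProbabilityMeasure μ]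
    (Z : Fin K × ℕ → Ω → EuclideanSpace ℝ (Fin p))
    (hmeas : ∀ k, Measurable (Z k))
    (hindep : iIndepFun Z μ)
    (hident : ∀ j a, Measure.map (Z (j, a)) μ = ν j)
    (z : EuclideanSpace ℝ (Fin p)) (hz : ‖z‖ = 1)
    (y : Fin K)
    (Nc : Fin K → ℕ → ℕ)
    (hNpos : ∀ᶠ N in atTop, ∀ j, 0 < Nc j N)
    (hNsum : ∀ᶠ N in atTop, ∑ j, Nc j N = N)
    (hNlim : ∀ j, Tendsto (fun N : ℕ => (Nc j N : ℝ) / N) atTop (nhds (π j))) :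
    ∀ᵐ ω ∂μ,
      Tendsto (fun N : ℕ =>
          (-(1 / (τ * (Nc y N : ℝ))) *
              ∑ a ∈ Finset.range (Nc y N), ⟪z, Z (y, a) ω⟫ +
            Real.log (∑ j : Fin K, ∑ a ∈ Finset.range (Nc j N),
              Real.exp (⟪z, Z (j, a) ω⟫ / τ))) - Real.log N)
        atTop
        (nhds (-(1 / τ) * ⟪z, ∫ w, w ∂(ν y)⟫ +
          Real.log (∑ j : Fin K, π j * ∫ w, Real.exp (⟪z, w⟫ / τ) ∂(ν j)))) := by
  haveI : Nonempty (Fin K) := ⟨⟨0, hK⟩⟩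
  -- the two test functions
  set f1 : EuclideanSpace ℝ (Fin p) → ℝ := fun w => ⟪z, w⟫ with hf1
  set f2 : EuclideanSpace ℝ (Fin p) → ℝ := fun w => Real.exp (⟪z, w⟫ / τ) with hf2
  have hf1c : Continuous f1 := continuous_const.inner continuous_id
  have hf2c : Continuous f2 := Real.continuous_exp.comp (hf1c.div_const τ)
  -- integrability
  have hbound1 : ∀ j, ∀ᵐ w ∂(ν j), ‖f1 w‖ ≤ 1 := by
    intro j
    filter_upwards [hν j] with w hw
    calc ‖f1 w‖ ≤ ‖z‖ * ‖w‖ := norm_inner_le_norm z w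
      _ = 1 := by rw [hz, hw, one_mul]
  have hint1 : ∀ j, Integrable f1 (ν j) := fun j =>
    (integrable_const (1 : ℝ)).mono' hf1c.aestronglyMeasurable (hbound1 j)
  have hint2 : ∀ j, Integrable f2 (ν j) := by
    intro j
    refine (integrable_const (Real.exp (1 / τ))).mono' hf2c.aestronglyMeasurable ?_
    filter_upwards [hbound1 j] with w hw
    have h1 : ⟪z, w⟫ ≤ 1 := le_of_abs_le hw
    have : ⟪z, w⟫ / τ ≤ 1 / τ := by gcongr
    simpa [f2, Real.norm_eq_abs, abs_of_pos (Real.exp_pos _)] using Real.exp_le_exp.mpr this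
  have hintid : Integrable (fun w => w) (ν y) := by
    refine (integrable_const (1 : ℝ)).mono' aestronglyMeasurable_id ?_
    filter_upwards [hν y] with w hw using le_of_eq hw
  -- pairwise independence within class
  have hpind : ∀ j : Fin K, Pairwise fun a b => IndepFun (Z (j, a)) (Z (j, b)) μ := by
    intro j a b hab
    exact hindep.indepFun (by simp [hab])
  -- SLLN for both functions and all classes
  have hA := fun j : Fin K => slln_helper μ (ν j) (fun a => Z (j, a))
    (fun a => hmeas _) (hpind j) (fun a => hident j a) f1 hf1c (hint1 j)
  have hB := fun j : Fin K => slln_helper μ (ν j) (fun a => Z (j, a))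
    (fun a => hmeas _) (hpind j) (fun a => hident j a) f2 hf2c (hint2 j)
  rw [← ae_all_iff] at hA hB
  -- Nc j tends to infinity
  have hNinf : ∀ j, Tendsto (fun N => Nc j N) atTop atTop := by
    intro j
    rw [← tendsto_natCast_atTop_iff (R := ℝ)]
    have hev : ∀ᶠ N : ℕ in atTop, π j / 2 * N ≤ (Nc j N : ℝ) := by
      have := (hNlim j).eventually (eventually_ge_nhds (show π j / 2 < π j by
        linarith [hπpos j]))
      filter_upwards [this, eventually_gt_atTop 0] with N h hN
      have hN' : (0 : ℝ) < N := by exact_mod_cast hN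
      calc π j / 2 * N ≤ (Nc j N : ℝ) / N * N := by
            exact mul_le_mul_of_nonneg_right h hN'.le
        _ = (Nc j N : ℝ) := by field_simp
    exact tendsto_atTop_mono' _ hev
      (tendsto_natCast_atTop_atTop.const_mul_atTop (by linarith [hπpos j]))
  -- positivity of the limit of the log argument
  have hBpos : ∀ j, 0 < ∫ w, f2 w ∂(ν j) := fun j => integral_exp_pos (hint2 j)
  have hLpos : 0 < ∑ j : Fin K, π j * ∫ w, f2 w ∂(ν j) :=
    Finset.sum_pos (fun j _ => mul_pos (hπpos j) (hBpos j)) Finset.univ_nonempty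
  -- rewrite inner of integral
  have hAint : ⟪z, ∫ w, w ∂(ν y)⟫ = ∫ w, f1 w ∂(ν y) := (integral_inner hintid z).symm
  filter_upwards [hA, hB] with ω hAω hBω
  -- deterministic part
  have hv : Tendsto (fun N => ((Nc y N : ℝ))⁻¹ *
      ∑ a ∈ Finset.range (Nc y N), ⟪z, Z (y, a) ω⟫) atTop (𝓝 (∫ w, f1 w ∂(ν y))) :=
    (hAω y).comp (hNinf y)
  have hu : ∀ j, Tendsto (fun N => ((Nc j N : ℝ))⁻¹ *
      ∑ a ∈ Finset.range (Nc j N), Real.exp (⟪z, Z (j, a) ω⟫ / τ)) atTop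
      (𝓝 (∫ w, f2 w ∂(ν j))) := fun j => (hBω j).comp (hNinf j)
  have hsum : Tendsto (fun N : ℕ => ∑ j : Fin K, ((Nc j N : ℝ) / N) *
      (((Nc j N : ℝ))⁻¹ * ∑ a ∈ Finset.range (Nc j N), Real.exp (⟪z, Z (j, a) ω⟫ / τ)))
      atTop (𝓝 (∑ j : Fin K, π j * ∫ w, f2 w ∂(ν j))) :=
    tendsto_finset_sum _ (fun j _ => (hNlim j).mul (hu j))
  have hG : Tendsto (fun N : ℕ =>
      -(1 / τ) * (((Nc y N : ℝ))⁻¹ * ∑ a ∈ Finset.range (Nc y N), ⟪z, Z (y, a) ω⟫) +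
      Real.log (∑ j : Fin K, ((Nc j N : ℝ) / N) *
        (((Nc j N : ℝ))⁻¹ * ∑ a ∈ Finset.range (Nc j N), Real.exp (⟪z, Z (j, a) ω⟫ / τ))))
      atTop (𝓝 (-(1 / τ) * ∫ w, f1 w ∂(ν y) +
        Real.log (∑ j : Fin K, π j * ∫ w, f2 w ∂(ν j)))) :=
    (hv.const_mul _).add (((Real.continuousAt_log hLpos.ne').tendsto).comp hsum)
  rw [hAint]
  refine hG.congr' ?_
  filter_upwards [hNpos, hNsum, eventually_gt_atTop 0] with N hNp hNs hN1
  have hNr : (0 : ℝ) < N := by exact_mod_cast hN1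
  have hterm1 : -(1 / (τ * (Nc y N : ℝ))) * ∑ a ∈ Finset.range (Nc y N), ⟪z, Z (y, a) ω⟫
      = -(1 / τ) * (((Nc y N : ℝ))⁻¹ * ∑ a ∈ Finset.range (Nc y N), ⟪z, Z (y, a) ω⟫) := by
    rw [one_div, mul_inv]
    ring
  have hSpos : 0 < ∑ j : Fin K, ∑ a ∈ Finset.range (Nc j N),
      Real.exp (⟪z, Z (j, a) ω⟫ / τ) :=
    Finset.sum_pos (fun j _ => Finset.sum_pos (fun a _ => Real.exp_pos _)
      (Finset.nonempty_range_iff.mpr (hNp j).ne')) Finset.univ_nonempty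
  have hfrac : ∑ j : Fin K, ((Nc j N : ℝ) / N) *
      (((Nc j N : ℝ))⁻¹ * ∑ a ∈ Finset.range (Nc j N), Real.exp (⟪z, Z (j, a) ω⟫ / τ))
      = (∑ j : Fin K, ∑ a ∈ Finset.range (Nc j N), Real.exp (⟪z, Z (j, a) ω⟫ / τ)) / N := by
    rw [Finset.sum_div]
    refine Finset.sum_congr rfl (fun j _ => ?_)
    have hcj : ((Nc j N : ℝ)) ≠ 0 := by exact_mod_cast (hNp j).ne'
    field_simp
  rw [hterm1, hfrac, Real.log_div hSpos.ne' hNr.ne']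
  ring
end

section
/- Let p ≥ 1, w ∈ ℝ^p, b ∈ ℝ, y ∈ {-1, 1}, and δ ∈ (0, 1). Let Z, Z_1, …, Z_N be i.i.d. random vectors taking values in the unit sphere S^{p-1} = {v ∈ ℝ^p : ‖v‖₂ = 1}, and define L_log(y, z) = log(1 + exp(-y(⟨w, z⟩ + b))). Then with probability at least 1 − δ/2, E[L_log(y, Z)] − (1/N) Σ_{i=1}^{N} L_log(y, Z_i) ≤ sqrt( (2/N) · E[⟨w, Z − E[Z]⟩²] · ln(2/δ) ) + (ln(2/δ)/(3N)) · log(1 + exp(‖w‖₂ − y·b)). -/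
open scoped RealInnerProductSpace
open MeasureTheory ProbabilityTheory
open scoped ENNReal
open Real
open scoped Nat



lemma exp_series_shift (u : ℝ) :
    Real.exp u - u - 1 = ∑' n : ℕ, u ^ (n + 2) / ((n + 2)! : ℝ) := by
  have hsum : Summable (fun n : ℕ => u ^ n / (n ! : ℝ)) := Real.summable_pow_div_factorial u
  have h0 : Real.exp u = ∑' n : ℕ, u ^ n / (n ! : ℝ) := by
    rw [Real.exp_eq_exp_ℝ, NormedSpace.exp_eq_tsum_div]
  have h1 : (∑' n : ℕ, u ^ n / (n ! : ℝ)) = u ^ 0 / (0! : ℝ) + ∑' n : ℕ, u ^ (n + 1) / ((n + 1)! : ℝ) :=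
    Summable.tsum_eq_zero_add hsum
  have hsum1 : Summable (fun n : ℕ => u ^ (n + 1) / ((n + 1)! : ℝ)) :=
    (summable_nat_add_iff 1).2 hsum
  have h2 : (∑' n : ℕ, u ^ (n + 1) / ((n + 1)! : ℝ)) =
      u ^ 1 / (1! : ℝ) + ∑' n : ℕ, u ^ (n + 2) / ((n + 2)! : ℝ) := by
    have := Summable.tsum_eq_zero_add hsum1
    simpa using this
  rw [h0, h1, h2]
  simp
  ring

lemma summable_shift2 (u : ℝ) : Summable (fun n : ℕ => u ^ (n + 2) / ((n + 2)! : ℝ)) :=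
  (summable_nat_add_iff 2).2 (Real.summable_pow_div_factorial u)

lemma g_nonneg (u : ℝ) : 0 ≤ Real.exp u - u - 1 := by
  have := Real.add_one_le_exp u
  linarith

lemma half_sq_le_g {u : ℝ} (hu : 0 ≤ u) : u ^ 2 / 2 ≤ Real.exp u - u - 1 := by
  have := Real.quadratic_le_exp_of_nonneg hu
  linarith

lemma g_le_half_sq {u : ℝ} (hu : u ≤ 0) : Real.exp u - u - 1 ≤ u ^ 2 / 2 := by
  -- q t = 1 + t + t^2/2 - exp t is antitone on ℝ≤0 since q' = 1 + t - exp t ≤ 0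
  set q : ℝ → ℝ := fun t => 1 + t + t ^ 2 / 2 - Real.exp t with hq
  have hderiv : ∀ t : ℝ, HasDerivAt q (1 + t - Real.exp t) t := by
    intro t
    have h1 : HasDerivAt (fun t : ℝ => 1 + t + t ^ 2 / 2) (1 + t) t := by
      have := ((hasDerivAt_id t).const_add (1 : ℝ)).add
        (((hasDerivAt_pow 2 t)).div_const 2)
      exact this.congr_deriv (by push_cast; ring)
    exact h1.sub (Real.hasDerivAt_exp t)
  have hmono : AntitoneOn q (Set.Iic 0) := by
    apply antitoneOn_of_deriv_nonpos (convex_Iic 0)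
    · exact (Continuous.continuousOn (by continuity))
    · intro t _
      exact (hderiv t).differentiableAt.differentiableWithinAt
    · intro t _
      rw [(hderiv t).deriv]
      have := Real.add_one_le_exp t
      linarith
  have := hmono (Set.mem_Iic.2 hu) (Set.mem_Iic.2 le_rfl) hu
  simp only [hq, Real.exp_zero] at this
  linarith

lemma g_mono_sq {u U : ℝ} (hu : 0 ≤ u) (huU : u ≤ U) :
    U ^ 2 * (Real.exp u - u - 1) ≤ u ^ 2 * (Real.exp U - U - 1) := by
  have hU : 0 ≤ U := hu.trans huU
  rw [exp_series_shift u, exp_series_shift U, ← tsum_mul_left, ← tsum_mul_left]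
  apply Summable.tsum_le_tsum
  · intro n
    have hfp : (0:ℝ) < ((n + 2)! : ℝ) := by positivity
    rw [← mul_div_assoc, ← mul_div_assoc, div_le_div_iff_of_pos_right hfp]
    have e1 : U ^ 2 * u ^ (n + 2) = (u ^ 2 * U ^ 2) * u ^ n := by ring
    have e2 : u ^ 2 * U ^ (n + 2) = (u ^ 2 * U ^ 2) * U ^ n := by ring
    rw [e1, e2]
    exact mul_le_mul_of_nonneg_left (pow_le_pow_left₀ hu huU n) (by positivity)
  · exact (summable_shift2 u).mul_left _
  · exact (summable_shift2 U).mul_left _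

lemma g_le_bernstein {u : ℝ} (hu : 0 ≤ u) (hu3 : u < 3) :
    Real.exp u - u - 1 ≤ u ^ 2 / (2 * (1 - u / 3)) := by
  have hfac : ∀ n : ℕ, (2 * 3 ^ n : ℝ) ≤ ((n + 2)! : ℝ) := by
    intro n
    induction n with
    | zero => norm_num
    | succ k ih =>
        have h3 : ((k + 3)! : ℝ) = (k + 3) * ((k + 2)! : ℝ) := by
          rw [show k + 3 = (k + 2) + 1 from rfl, Nat.factorial_succ]
          push_cast; ring
        calc (2 * 3 ^ (k + 1) : ℝ) = 3 * (2 * 3 ^ k) := by ring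
        _ ≤ 3 * ((k + 2)! : ℝ) := by nlinarith [ih]
        _ ≤ (k + 3) * ((k + 2)! : ℝ) := by
            have : (0:ℝ) ≤ ((k + 2)! : ℝ) := by positivity
            nlinarith [this]
        _ = ((k + 3)! : ℝ) := h3.symm
  have hgeo : u / 3 < 1 := by linarith
  have hgeo0 : 0 ≤ u / 3 := by linarith
  rw [exp_series_shift u]
  have hsg : Summable (fun n : ℕ => u ^ 2 / 2 * (u / 3) ^ n) :=
    (summable_geometric_of_lt_one hgeo0 hgeo).mul_left _
  calc (∑' n : ℕ, u ^ (n + 2) / ((n + 2)! : ℝ))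
      ≤ ∑' n : ℕ, u ^ 2 / 2 * (u / 3) ^ n := by
        apply Summable.tsum_le_tsum _ (summable_shift2 u) hsg
        intro n
        have h1 : u ^ (n + 2) / ((n + 2)! : ℝ) ≤ u ^ (n + 2) / (2 * 3 ^ n) := by
          apply div_le_div_of_nonneg_left (by positivity) (by positivity) (hfac n)
        refine h1.trans ?_
        rw [div_pow, pow_add]
        rw [div_mul_div_comm, mul_comm (u ^ n) (u ^ 2), mul_comm ((2:ℝ)) (3 ^ n)]
    _ = u ^ 2 / 2 * (1 - u / 3)⁻¹ := by
        rw [tsum_mul_left, tsum_geometric_of_lt_one hgeo0 hgeo]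
    _ = u ^ 2 / (2 * (1 - u / 3)) := by
        rw [div_mul_eq_div_div]
        rw [div_eq_mul_inv (u ^ 2 / 2)]

lemma key_pointwise {x M lam : ℝ} (hx : x ≤ M) (hxlow : -M ≤ x) (hM : 0 < M)
    (hlam : 0 ≤ lam) :
    Real.exp (lam * x) ≤ 1 + lam * x +
      x ^ 2 / M ^ 2 * (Real.exp (lam * M) - lam * M - 1) := by
  rcases eq_or_lt_of_le hlam with h0 | hlam
  · rw [← h0]; simp
  set u := lam * x with hu
  set U := lam * M with hU
  have hUpos : 0 < U := mul_pos hlam hM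
  have huU : u ≤ U := mul_le_mul_of_nonneg_left hx hlam.le
  have hkey : U ^ 2 * (Real.exp u - u - 1) ≤ u ^ 2 * (Real.exp U - U - 1) := by
    rcases le_or_gt 0 u with h | h
    · exact g_mono_sq h huU
    · calc U ^ 2 * (Real.exp u - u - 1) ≤ U ^ 2 * (u ^ 2 / 2) :=
            mul_le_mul_of_nonneg_left (g_le_half_sq h.le) (by positivity)
        _ = u ^ 2 * (U ^ 2 / 2) := by ring
        _ ≤ u ^ 2 * (Real.exp U - U - 1) :=
            mul_le_mul_of_nonneg_left (half_sq_le_g hUpos.le) (by positivity)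
  have hx2 : u ^ 2 / U ^ 2 = x ^ 2 / M ^ 2 := by
    rw [hu, hU, mul_pow, mul_pow, mul_div_mul_left _ _ (by positivity : (lam:ℝ) ^ 2 ≠ 0)]
  have hdiv : Real.exp u - u - 1 ≤ u ^ 2 / U ^ 2 * (Real.exp U - U - 1) := by
    rw [div_mul_eq_mul_div, le_div_iff₀ (by positivity : (0:ℝ) < U ^ 2)]
    linarith [hkey]
  rw [hx2] at hdiv
  linarith [hdiv]


lemma integrable_of_abs_le {Ω : Type*} [MeasurableSpace Ω] {μ : Measure Ω}
    [IsFiniteMeasure μ] {g : Ω → ℝ} (hg : Measurable g) (C : ℝ)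
    (h : ∀ ω, |g ω| ≤ C) : Integrable g μ :=
  Integrable.mono' (integrable_const C) hg.aestronglyMeasurable
    (Filter.Eventually.of_forall (by simpa [Real.norm_eq_abs] using h))

lemma mgf_bennett {Ω : Type*} [MeasurableSpace Ω] (μ : Measure Ω)
    [IsProbabilityMeasure μ] (Y : Ω → ℝ) (hYm : Measurable Y) (M v lam : ℝ)
    (hM : 0 < M) (hbd : ∀ ω, |Y ω| ≤ M) (hmean : ∫ ω, Y ω ∂μ = 0)
    (hvar : ∫ ω, (Y ω) ^ 2 ∂μ ≤ v) (hlam : 0 ≤ lam) (hlam3 : lam * M < 3) :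
    ∫ ω, Real.exp (lam * Y ω) ∂μ ≤
      Real.exp (v * lam ^ 2 / (2 * (1 - lam * M / 3))) := by
  set C : ℝ := (Real.exp (lam * M) - lam * M - 1) / M ^ 2 with hC
  have hC0 : 0 ≤ C := div_nonneg (g_nonneg _) (by positivity)
  have hv0 : 0 ≤ v := le_trans (integral_nonneg fun ω => sq_nonneg _) hvar
  have hintY : Integrable Y μ := integrable_of_abs_le hYm M hbd
  have hintY2 : Integrable (fun ω => (Y ω) ^ 2) μ := by
    apply integrable_of_abs_le (hYm.pow_const 2) (M ^ 2)
    intro ω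
    rw [abs_pow]
    exact pow_le_pow_left₀ (abs_nonneg _) (hbd ω) 2
  have hintexp : Integrable (fun ω => Real.exp (lam * Y ω)) μ := by
    apply integrable_of_abs_le ((hYm.const_mul lam).exp) (Real.exp (lam * M))
    intro ω
    rw [abs_of_pos (Real.exp_pos _), Real.exp_le_exp]
    exact mul_le_mul_of_nonneg_left ((abs_le.1 (hbd ω)).2) hlam
  have hpt : ∀ ω, Real.exp (lam * Y ω) ≤ 1 + lam * Y ω + C * (Y ω) ^ 2 := by
    intro ω
    have := key_pointwise (abs_le.1 (hbd ω)).2 (abs_le.1 (hbd ω)).1 hM hlam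
    calc Real.exp (lam * Y ω) ≤ 1 + lam * Y ω +
          (Y ω) ^ 2 / M ^ 2 * (Real.exp (lam * M) - lam * M - 1) := this
      _ = 1 + lam * Y ω + C * (Y ω) ^ 2 := by rw [hC]; ring
  have hint1 : ∫ ω, Real.exp (lam * Y ω) ∂μ ≤ 1 + C * v := by
    calc ∫ ω, Real.exp (lam * Y ω) ∂μ
        ≤ ∫ ω, (1 + lam * Y ω + C * (Y ω) ^ 2) ∂μ := by
          have hi1 : Integrable (fun ω => 1 + lam * Y ω) μ := by
            exact (integrable_const 1).add (hintY.const_mul lam)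
          have hi2 : Integrable (fun ω => C * (Y ω) ^ 2) μ := hintY2.const_mul C
          apply integral_mono hintexp _ hpt
          exact hi1.add hi2
      _ = 1 + lam * (∫ ω, Y ω ∂μ) + C * ∫ ω, (Y ω) ^ 2 ∂μ := by
          have hi1 : Integrable (fun ω => 1 + lam * Y ω) μ := by
            exact (integrable_const 1).add (hintY.const_mul lam)
          have hi2 : Integrable (fun ω => C * (Y ω) ^ 2) μ := hintY2.const_mul C
          rw [integral_add hi1 hi2, integral_add (integrable_const 1)
            (hintY.const_mul lam), integral_const, MeasureTheory.integral_const_mul, MeasureTheory.integral_const_mul]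
          simp
      _ ≤ 1 + C * v := by
          rw [hmean]
          have := mul_le_mul_of_nonneg_left hvar hC0
          linarith
  have hub : C * v ≤ v * lam ^ 2 / (2 * (1 - lam * M / 3)) := by
    have hg := g_le_bernstein (mul_nonneg hlam hM.le) hlam3
    have hMne : (M:ℝ) ^ 2 ≠ 0 := by positivity
    have hCle : C ≤ lam ^ 2 / (2 * (1 - lam * M / 3)) := by
      rw [hC, div_le_iff₀ (by positivity : (0:ℝ) < M ^ 2)]
      have hden : 0 < 1 - lam * M / 3 := by linarith [hlam3]
      calc Real.exp (lam * M) - lam * M - 1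
          ≤ (lam * M) ^ 2 / (2 * (1 - lam * M / 3)) := hg
        _ = lam ^ 2 / (2 * (1 - lam * M / 3)) * M ^ 2 := by ring
    calc C * v ≤ lam ^ 2 / (2 * (1 - lam * M / 3)) * v :=
        mul_le_mul_of_nonneg_right hCle hv0
      _ = v * lam ^ 2 / (2 * (1 - lam * M / 3)) := by ring
  calc ∫ ω, Real.exp (lam * Y ω) ∂μ ≤ 1 + C * v := hint1
    _ ≤ Real.exp (C * v) := by linarith [Real.add_one_le_exp (C * v)]
    _ ≤ Real.exp (v * lam ^ 2 / (2 * (1 - lam * M / 3))) := Real.exp_le_exp.2 hub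

lemma sqrt_add_le_add_sqrt {x y : ℝ} (hx : 0 ≤ x) (hy : 0 ≤ y) :
    Real.sqrt (x + y) ≤ Real.sqrt x + Real.sqrt y := by
  rw [show x + y = Real.sqrt x ^ 2 + Real.sqrt y ^ 2 by
    rw [Real.sq_sqrt hx, Real.sq_sqrt hy]]
  calc Real.sqrt (Real.sqrt x ^ 2 + Real.sqrt y ^ 2)
      ≤ Real.sqrt ((Real.sqrt x + Real.sqrt y) ^ 2) := by
        apply Real.sqrt_le_sqrt
        nlinarith [Real.sqrt_nonneg x, Real.sqrt_nonneg y]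
    _ = Real.sqrt x + Real.sqrt y := Real.sqrt_sq (by positivity)

lemma softplus_le_of_le {s t : ℝ} (h : t ≤ s) :
    Real.log (1 + Real.exp s) ≤ (s - t) + Real.log (1 + Real.exp t) := by
  have h1 : 1 + Real.exp s ≤ Real.exp (s - t) * (1 + Real.exp t) := by
    have h2 : Real.exp (s - t) * (1 + Real.exp t) =
        Real.exp (s - t) + Real.exp s := by
      rw [mul_add, mul_one, ← Real.exp_add]
      ring_nf
    rw [h2]
    have : (1:ℝ) ≤ Real.exp (s - t) := Real.one_le_exp (by linarith)
    linarith
  calc Real.log (1 + Real.exp s) ≤ Real.log (Real.exp (s - t) * (1 + Real.exp t)) :=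
      Real.log_le_log (by positivity) h1
    _ = (s - t) + Real.log (1 + Real.exp t) := by
      rw [Real.log_mul (Real.exp_ne_zero _) (by positivity), Real.log_exp]

lemma softplus_mono {s t : ℝ} (h : t ≤ s) :
    Real.log (1 + Real.exp t) ≤ Real.log (1 + Real.exp s) :=
  Real.log_le_log (by positivity) (by linarith [Real.exp_le_exp.2 h])

lemma softplus_lip (s t : ℝ) :
    |Real.log (1 + Real.exp s) - Real.log (1 + Real.exp t)| ≤ |s - t| := by
  rcases le_total t s with h | h
  · rw [abs_of_nonneg (by linarith [softplus_mono h]), abs_of_nonneg (by linarith)]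
    linarith [softplus_le_of_le h]
  · rw [abs_of_nonpos (by linarith [softplus_mono h]), abs_of_nonpos (by linarith)]
    linarith [softplus_le_of_le h]



set_option maxHeartbeats 1000000 in
theorem bernstein_tail {Ω : Type*} [MeasurableSpace Ω] (μ : Measure Ω)
    [IsProbabilityMeasure μ] (X : ℕ → Ω → ℝ) (hXm : ∀ i, Measurable (X i))
    (hindep : iIndepFun X μ) (M v L m : ℝ)
    (hM : 0 < M) (hL : 0 < L) (hv : 0 ≤ v) (N : ℕ) (hN : 0 < N)
    (hmean : ∀ i, ∫ ω, X i ω ∂μ = m) (hbd : ∀ i ω, |m - X i ω| ≤ M)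
    (hvar : ∀ i, ∫ ω, (m - X i ω) ^ 2 ∂μ ≤ v) :
    (μ {ω | Real.sqrt (2 / N * v * L) + L / (3 * N) * M <
      m - (N : ℝ)⁻¹ * ∑ i ∈ Finset.range N, X (i + 1) ω}).toReal ≤ Real.exp (-L) := by
  have hNR : (0:ℝ) < N := Nat.cast_pos.2 hN
  set t : ℝ := Real.sqrt (2 / N * v * L) + L / (3 * N) * M with ht
  have ht0 : 0 ≤ t := by positivity
  -- the centered variables
  set Y : ℕ → Ω → ℝ := fun i ω => m - X i ω with hY
  have hYm : ∀ i, Measurable (Y i) := fun i => measurable_const.sub (hXm i)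
  have hYindep : iIndepFun Y μ := by
    have := hindep.comp (fun _ (x : ℝ) => m - x) (fun _ => measurable_const.sub measurable_id)
    exact this
  have hYbd : ∀ i ω, |Y i ω| ≤ M := hbd
  have hXint : ∀ i, Integrable (X i) μ := by
    intro i
    apply integrable_of_abs_le (hXm i) (|m| + M)
    intro ω
    have := hbd i ω
    have h1 := abs_sub_abs_le_abs_sub m (X i ω)
    have h2 : |m| - |X i ω| ≤ M := by
      calc |m| - |X i ω| ≤ |m - X i ω| := h1
        _ ≤ M := this
    -- |X i ω| ≤ |X i ω - m| + |m| ≤ M + |m|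
    have h3 : |X i ω| ≤ |X i ω - m| + |m| := by
      calc |X i ω| = |X i ω - m + m| := by ring_nf
        _ ≤ |X i ω - m| + |m| := abs_add_le _ _
    rw [abs_sub_comm] at h3
    linarith
  have hYmean : ∀ i, ∫ ω, Y i ω ∂μ = 0 := by
    intro i
    have : ∫ ω, Y i ω ∂μ = (∫ _ω, m ∂μ) - ∫ ω, X i ω ∂μ :=
      integral_sub (integrable_const m) (hXint i)
    rw [this, integral_const, hmean i]
    simp
  -- the sum
  set S : Ω → ℝ := fun ω => ∑ i ∈ Finset.range N, Y (i + 1) ω with hS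
  have hSm : Measurable S := Finset.measurable_sum _ (fun i _ => hYm (i + 1))
  have hSbd : ∀ ω, |S ω| ≤ N * M := by
    intro ω
    calc |S ω| ≤ ∑ i ∈ Finset.range N, |Y (i + 1) ω| := Finset.abs_sum_le_sum_abs _ _
      _ ≤ ∑ _i ∈ Finset.range N, M := Finset.sum_le_sum fun i _ => hYbd _ ω
      _ = N * M := by rw [Finset.sum_const, Finset.card_range]; simp [mul_comm]
  -- event inclusion
  have hsub : {ω | t < m - (N : ℝ)⁻¹ * ∑ i ∈ Finset.range N, X (i + 1) ω} ⊆
      {ω | (N : ℝ) * t ≤ S ω} := by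
    intro ω hω
    simp only [Set.mem_setOf_eq] at hω ⊢
    have hSval : S ω = N * m - ∑ i ∈ Finset.range N, X (i + 1) ω := by
      rw [hS]
      simp only
      rw [Finset.sum_sub_distrib, Finset.sum_const, Finset.card_range]
      simp [nsmul_eq_mul]
    have : (N : ℝ) * t < (N : ℝ) * (m - (N : ℝ)⁻¹ * ∑ i ∈ Finset.range N, X (i + 1) ω) :=
      (mul_lt_mul_iff_right₀ hNR).2 hω
    have heq : (N : ℝ) * (m - (N : ℝ)⁻¹ * ∑ i ∈ Finset.range N, X (i + 1) ω) = S ω := by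
      rw [hSval]; field_simp
    exact (this.trans_le heq.le).le
  have hmono : (μ {ω | t < m - (N : ℝ)⁻¹ * ∑ i ∈ Finset.range N, X (i + 1) ω}).toReal ≤
      (μ {ω | (N : ℝ) * t ≤ S ω}).toReal := by
    apply ENNReal.toReal_mono (measure_ne_top μ _) (measure_mono hsub)
  refine hmono.trans ?_
  -- the epsilon-claim
  have claim : ∀ ε : ℝ, 0 < ε →
      (μ {ω | (N : ℝ) * t ≤ S ω}).toReal ≤ Real.exp (-L + ε) := by
    intro ε hε
    set c : ℝ := M / 3 with hc
    have hc0 : 0 < c := by rw [hc]; linarith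
    set V : ℝ := N * v with hV
    have hV0 : 0 ≤ V := by positivity
    set η : ℝ := (c * ε) ^ 2 / (2 * L) with hη
    have hη0 : 0 < η := by rw [hη]; positivity
    have hVη : 0 < V + η := by linarith
    set a : ℝ := Real.sqrt (2 * L / (V + η)) with ha
    have ha0 : 0 < a := Real.sqrt_pos.2 (by positivity)
    have ha2 : a ^ 2 = 2 * L / (V + η) := Real.sq_sqrt (by positivity)
    have ha2V : a ^ 2 * (V + η) = 2 * L := by rw [ha2]; field_simp
    have h1ca : (0:ℝ) < 1 + c * a := by positivity
    set lam : ℝ := a / (1 + c * a) with hlam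
    have hlam0 : 0 < lam := by positivity
    have hclam : c * lam < 1 := by
      rw [hlam, mul_div_assoc']
      rw [div_lt_one h1ca]
      linarith
    have hlamM3 : lam * M < 3 := by
      have : lam * M = 3 * (c * lam) := by rw [hc]; ring
      rw [this]; linarith
    have hden : 0 < 1 - lam * M / 3 := by
      have : lam * M / 3 = c * lam := by rw [hc]; ring
      rw [this]; linarith
    -- Chernoff
    have hintexp : Integrable (fun ω => Real.exp (lam * S ω)) μ := by
      apply integrable_of_abs_le ((hSm.const_mul lam).exp) (Real.exp (lam * (N * M)))
      intro ω
      rw [abs_of_pos (Real.exp_pos _), Real.exp_le_exp]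
      exact mul_le_mul_of_nonneg_left ((abs_le.1 (hSbd ω)).2) hlam0.le
    have hch := measure_ge_le_exp_mul_mgf (X := S) (μ := μ) (t := lam)
      ((N : ℝ) * t) hlam0.le hintexp
    have hmgf : mgf S μ lam = ∏ i ∈ Finset.Ico 1 (N + 1), mgf (Y i) μ lam := by
      have hSeq : S = ∑ i ∈ Finset.Ico 1 (N + 1), Y i := by
        funext ω
        rw [hS]
        simp only [Finset.sum_apply]
        rw [Finset.sum_Ico_eq_sum_range]
        simp [add_comm]
      rw [hSeq]
      exact hYindep.mgf_sum hYm _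
    set B : ℝ := Real.exp (v * lam ^ 2 / (2 * (1 - lam * M / 3))) with hB
    have hprod : mgf S μ lam ≤ B ^ N := by
      rw [hmgf]
      calc ∏ i ∈ Finset.Ico 1 (N + 1), mgf (Y i) μ lam
          ≤ ∏ _i ∈ Finset.Ico 1 (N + 1), B := by
            apply Finset.prod_le_prod (fun i _ => mgf_nonneg)
            intro i _
            exact mgf_bennett μ (Y i) (hYm i) M v lam hM (hYbd i) (hYmean i)
              (hvar i) hlam0.le hlamM3
        _ = B ^ N := by rw [Finset.prod_const, Nat.card_Ico]; simp
    have hchain : (μ {ω | (N : ℝ) * t ≤ S ω}).toReal ≤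
        Real.exp (-lam * ((N : ℝ) * t) + N * (v * lam ^ 2 / (2 * (1 - lam * M / 3)))) := by
      refine hch.trans ?_
      rw [Real.exp_add]
      apply mul_le_mul_of_nonneg_left _ (Real.exp_pos _).le
      rw [hB] at hprod
      calc mgf S μ lam ≤ (Real.exp (v * lam ^ 2 / (2 * (1 - lam * M / 3)))) ^ N := hprod
        _ = Real.exp (N * (v * lam ^ 2 / (2 * (1 - lam * M / 3)))) := by
            rw [← Real.exp_nat_mul]
    refine hchain.trans (Real.exp_le_exp.2 ?_)
    -- the numeric inequality
    have hNt : (N : ℝ) * t = Real.sqrt (2 * V * L) + c * L := by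
      rw [ht, mul_add]
      congr 1
      · rw [show (2 : ℝ) * V * L = (N:ℝ) ^ 2 * (2 / N * v * L) by rw [hV]; field_simp]
        rw [Real.sqrt_mul (sq_nonneg _), Real.sqrt_sq hNR.le]
      · rw [hc]; field_simp
    have hKey1 : a * Real.sqrt (2 * (V + η) * L) = 2 * L := by
      rw [← Real.sqrt_sq ha0.le, ← Real.sqrt_mul (sq_nonneg a)]
      rw [show a ^ 2 * (2 * (V + η) * L) = (2 * L) ^ 2 by linear_combination (2 * L) * ha2V]
      exact Real.sqrt_sq (by positivity)
    have hKey2 : Real.sqrt (2 * (V + η) * L) ≤ Real.sqrt (2 * V * L) + c * ε := by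
      rw [show (2:ℝ) * (V + η) * L = 2 * V * L + 2 * η * L by ring]
      refine (sqrt_add_le_add_sqrt (by positivity) (by positivity)).trans ?_
      have : (2:ℝ) * η * L = (c * ε) ^ 2 := by rw [hη]; field_simp
      rw [this, Real.sqrt_sq (by positivity)]
    set A : ℝ := Real.sqrt (2 * V * L) with hA
    have hA0 : 0 ≤ A := Real.sqrt_nonneg _
    have haA : 2 * L - a * (c * ε) ≤ a * A := by
      have h' := mul_le_mul_of_nonneg_left hKey2 ha0.le
      nlinarith [hKey1, h']
    have hMc : 1 - lam * M / 3 = 1 - c * lam := by rw [hc]; ring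
    have hvV : (N : ℝ) * (v * lam ^ 2 / (2 * (1 - lam * M / 3))) =
        V * lam ^ 2 / (2 * (1 - c * lam)) := by
      rw [hMc, hV]; ring
    rw [hvV, hNt]
    have h1c : 1 - c * lam = 1 / (1 + c * a) := by
      rw [hlam]; field_simp; ring
    have key_eq : -lam * (A + c * L) + V * lam ^ 2 / (2 * (1 - c * lam)) =
        -((a * (A + c * L) - V * a ^ 2 / 2) / (1 + c * a)) := by
      rw [h1c, hlam]
      field_simp
      ring
    rw [key_eq]
    have hfin : L - ε ≤ (a * (A + c * L) - V * a ^ 2 / 2) / (1 + c * a) := by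
      rw [le_div_iff₀ h1ca]
      nlinarith [haA, ha2V, mul_nonneg hη0.le (sq_nonneg a)]
    linarith [hfin]
  -- conclude from the claim
  by_contra hcon
  push_neg at hcon
  set r : ℝ := (μ {ω | (N : ℝ) * t ≤ S ω}).toReal with hr
  have hr0 : 0 < r := lt_trans (Real.exp_pos _) hcon
  have hlog : -L < Real.log r := (Real.lt_log_iff_exp_lt hr0).2 hcon
  set ε : ℝ := (Real.log r + L) / 2 with hε
  have hε0 : 0 < ε := by rw [hε]; linarith
  have := claim ε hε0
  have hlt : -L + ε < Real.log r := by rw [hε]; linarith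
  have : r ≤ Real.exp (-L + ε) := this
  have h2 : Real.exp (-L + ε) < Real.exp (Real.log r) := Real.exp_lt_exp.2 hlt
  rw [Real.exp_log hr0] at h2
  linarith


open scoped RealInnerProductSpace

lemma prob_le_of_tail {Ω : Type*} [MeasurableSpace Ω] (μ : Measure Ω)
    [IsProbabilityMeasure μ] (g : Ω → ℝ) (s q : ℝ) (hq : 0 ≤ q)
    (h : (μ {ω | s < g ω}).toReal ≤ q) :
    ENNReal.ofReal (1 - q) ≤ μ {ω | g ω ≤ s} := by
  have hc : {ω | g ω ≤ s} = {ω | s < g ω}ᶜ := by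
    ext ω; simp [not_lt]
  have h1 : μ {ω | s < g ω} ≤ ENNReal.ofReal q := by
    rw [← ENNReal.ofReal_toReal (measure_ne_top μ _)]
    exact ENNReal.ofReal_le_ofReal h
  rw [hc]
  have h2 : (1 : ℝ≥0∞) ≤ μ {ω | s < g ω}ᶜ + μ {ω | s < g ω} := by
    rw [← measure_univ (μ := μ), ← Set.compl_union_self {ω | s < g ω}]
    exact measure_union_le _ _
  calc ENNReal.ofReal (1 - q) ≤ 1 - ENNReal.ofReal q := by
        rw [← ENNReal.ofReal_one, ← ENNReal.ofReal_sub _ hq]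
    _ ≤ 1 - μ {ω | s < g ω} := tsub_le_tsub_left h1 1
    _ ≤ μ {ω | s < g ω}ᶜ := by
        rw [tsub_le_iff_right]
        exact h2
  
theorem stmt_9 (p : ℕ) (hp : 1 ≤ p) (w : EuclideanSpace ℝ (Fin p)) (b : ℝ)
    (y : ℝ) (hy : y = -1 ∨ y = 1) (δ : ℝ) (hδ : δ ∈ Set.Ioo (0 : ℝ) 1)
    {Ω : Type*} [MeasurableSpace Ω] (μ : Measure Ω) [IsProbabilityMeasure μ]
    (N : ℕ) (hN : 0 < N)
    (Z : ℕ → Ω → EuclideanSpace ℝ (Fin p)) (hmeas : ∀ i, Measurable (Z i))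
    (hindep : iIndepFun Z μ)
    (hident : ∀ i, Measure.map (Z i) μ = Measure.map (Z 0) μ)
    (hsphere : ∀ i ω, ‖Z i ω‖ = 1) :
    ENNReal.ofReal (1 - δ / 2) ≤
      μ {ω | (∫ ω', Real.log (1 + Real.exp (-y * (⟪w, Z 0 ω'⟫ + b))) ∂μ) -
          (N : ℝ)⁻¹ * ∑ i ∈ Finset.range N,
            Real.log (1 + Real.exp (-y * (⟪w, Z (i + 1) ω⟫ + b))) ≤
        Real.sqrt ((2 / N) *
            (∫ ω', ⟪w, Z 0 ω' - ∫ ω'', Z 0 ω'' ∂μ⟫ ^ 2 ∂μ) * Real.log (2 / δ)) +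
          (Real.log (2 / δ) / (3 * N)) *
            Real.log (1 + Real.exp (‖w‖ - y * b))} := by
  obtain ⟨hδ0, hδ1⟩ := hδ
  have hy1 : |y| = 1 := by rcases hy with h | h <;> simp [h]
  set F : EuclideanSpace ℝ (Fin p) → ℝ :=
    fun z => Real.log (1 + Real.exp (-y * (⟪w, z⟫ + b))) with hF
  set M : ℝ := Real.log (1 + Real.exp (‖w‖ - y * b)) with hM
  set L : ℝ := Real.log (2 / δ) with hL
  set c0 : EuclideanSpace ℝ (Fin p) := ∫ ω'', Z 0 ω'' ∂μ with hc0
  set v : ℝ := ∫ ω', ⟪w, Z 0 ω' - c0⟫ ^ 2 ∂μ with hv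
  set m : ℝ := ∫ ω', Real.log (1 + Real.exp (-y * (⟪w, Z 0 ω'⟫ + b))) ∂μ with hm
  -- basic positivity
  have hMpos : 0 < M := Real.log_pos (by linarith [Real.exp_pos (‖w‖ - y * b)])
  have hLpos : 0 < L := Real.log_pos ((one_lt_div hδ0).2 (by linarith))
  have hv0 : 0 ≤ v := integral_nonneg fun ω => sq_nonneg _
  -- measurability of F
  have hinner : Measurable (fun z : EuclideanSpace ℝ (Fin p) => (⟪w, z⟫ : ℝ)) :=
    (continuous_const.inner continuous_id).measurable
  have hFm : Measurable F :=
    Real.measurable_log.comp (measurable_const.add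
      (Real.measurable_exp.comp ((hinner.add_const b).const_mul (-y))))
  -- bounds on F
  have harg : ∀ z : EuclideanSpace ℝ (Fin p), ‖z‖ = 1 →
      -y * (⟪w, z⟫ + b) ≤ ‖w‖ - y * b := by
    intro z hz
    have h1 : |(⟪w, z⟫ : ℝ)| ≤ ‖w‖ := by
      have := abs_real_inner_le_norm w z
      rw [hz, mul_one] at this; exact this
    have h2 : -y * ⟪w, z⟫ ≤ ‖w‖ := by
      calc -y * ⟪w, z⟫ ≤ |(-y) * ⟪w, z⟫| := le_abs_self _
        _ = |(⟪w, z⟫ : ℝ)| := by rw [abs_mul, abs_neg, hy1, one_mul]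
        _ ≤ ‖w‖ := h1
    have h3 : -y * (⟪w, z⟫ + b) = -y * ⟪w, z⟫ - y * b := by ring
    linarith
  have hFle : ∀ z : EuclideanSpace ℝ (Fin p), ‖z‖ = 1 → F z ≤ M :=
    fun z hz => softplus_mono (harg z hz)
  have hF0 : ∀ z : EuclideanSpace ℝ (Fin p), 0 ≤ F z :=
    fun z => Real.log_nonneg (by linarith [Real.exp_pos (-y * (⟪w, z⟫ + b))])
  -- transfer of integrals via identical distribution
  have htransfer : ∀ (h : EuclideanSpace ℝ (Fin p) → ℝ), Measurable h → ∀ i,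
      ∫ ω, h (Z i ω) ∂μ = ∫ ω, h (Z 0 ω) ∂μ := by
    intro h hh i
    calc ∫ ω, h (Z i ω) ∂μ = ∫ z, h z ∂(Measure.map (Z i) μ) :=
        (integral_map (hmeas i).aemeasurable hh.aestronglyMeasurable).symm
      _ = ∫ z, h z ∂(Measure.map (Z 0) μ) := by rw [hident i]
      _ = ∫ ω, h (Z 0 ω) ∂μ :=
        integral_map (hmeas 0).aemeasurable hh.aestronglyMeasurable
  -- mean facts
  have hm_eq : m = ∫ ω, F (Z 0 ω) ∂μ := hm
  have hm0 : 0 ≤ m := by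
    rw [hm_eq]; exact integral_nonneg fun ω => hF0 _
  have hXint : ∀ i, Integrable (fun ω => F (Z i ω)) μ := by
    intro i
    apply integrable_of_abs_le (g := fun ω => F (Z i ω)) (hFm.comp (hmeas i)) M
    intro ω
    rw [abs_of_nonneg (hF0 _)]
    exact hFle _ (hsphere i ω)
  have hmM : m ≤ M := by
    rw [hm_eq]
    calc ∫ ω, F (Z 0 ω) ∂μ ≤ ∫ _ω, M ∂μ :=
        integral_mono (hXint 0) (integrable_const M) (fun ω => hFle _ (hsphere 0 ω))
      _ = M := by simp
  have hmean : ∀ i, ∫ ω, F (Z i ω) ∂μ = m :=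
    fun i => (htransfer F hFm i).trans hm_eq.symm
  have hbd : ∀ i ω, |m - F (Z i ω)| ≤ M := by
    intro i ω
    rw [abs_le]
    constructor
    · have := hFle _ (hsphere i ω); linarith
    · have := hF0 (Z i ω); linarith
  -- variance bound
  have hlip : ∀ z : EuclideanSpace ℝ (Fin p), |F z - F c0| ≤ |(⟪w, z - c0⟫ : ℝ)| := by
    intro z
    have h := softplus_lip (-y * (⟪w, z⟫ + b)) (-y * (⟪w, c0⟫ + b))
    have heq : -y * (⟪w, z⟫ + b) - -y * (⟪w, c0⟫ + b) = -y * (⟪w, z⟫ - ⟪w, c0⟫) := by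
      ring
    rw [heq] at h
    have heq2 : (⟪w, z⟫ : ℝ) - ⟪w, c0⟫ = ⟪w, z - c0⟫ := (inner_sub_right _ _ _).symm
    calc |F z - F c0| ≤ |(-y) * ((⟪w, z⟫ : ℝ) - ⟪w, c0⟫)| := h
      _ = |(⟪w, z⟫ : ℝ) - ⟪w, c0⟫| := by rw [abs_mul, abs_neg, hy1, one_mul]
      _ = |(⟪w, z - c0⟫ : ℝ)| := by rw [heq2]
  set κ : ℝ := F c0 with hκ
  have hptsq : ∀ ω, (F (Z 0 ω) - κ) ^ 2 ≤ (⟪w, Z 0 ω - c0⟫ : ℝ) ^ 2 := by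
    intro ω
    calc (F (Z 0 ω) - κ) ^ 2 = |F (Z 0 ω) - κ| ^ 2 := (sq_abs _).symm
      _ ≤ |(⟪w, Z 0 ω - c0⟫ : ℝ)| ^ 2 :=
          pow_le_pow_left₀ (abs_nonneg _) (hlip (Z 0 ω)) 2
      _ = (⟪w, Z 0 ω - c0⟫ : ℝ) ^ 2 := sq_abs _
  have hinnm : Measurable (fun ω => (⟪w, Z 0 ω - c0⟫ : ℝ)) :=
    hinner.comp ((hmeas 0).sub measurable_const)
  have hinnbd : ∀ ω, |(⟪w, Z 0 ω - c0⟫ : ℝ)| ≤ ‖w‖ * (1 + ‖c0‖) := by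
    intro ω
    calc |(⟪w, Z 0 ω - c0⟫ : ℝ)| ≤ ‖w‖ * ‖Z 0 ω - c0‖ := abs_real_inner_le_norm _ _
      _ ≤ ‖w‖ * (1 + ‖c0‖) := by
          apply mul_le_mul_of_nonneg_left _ (norm_nonneg w)
          calc ‖Z 0 ω - c0‖ ≤ ‖Z 0 ω‖ + ‖c0‖ := norm_sub_le _ _
            _ = 1 + ‖c0‖ := by rw [hsphere 0 ω]
  have hint_inn2 : Integrable (fun ω => (⟪w, Z 0 ω - c0⟫ : ℝ) ^ 2) μ := by
    apply integrable_of_abs_le (hinnm.pow_const 2) ((‖w‖ * (1 + ‖c0‖)) ^ 2)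
    intro ω
    rw [abs_pow]
    exact pow_le_pow_left₀ (abs_nonneg _) (hinnbd ω) 2
  have hint_sqκ : Integrable (fun ω => (F (Z 0 ω) - κ) ^ 2) μ := by
    apply integrable_of_abs_le (((hFm.comp (hmeas 0)).sub_const κ).pow_const 2)
      ((‖w‖ * (1 + ‖c0‖)) ^ 2)
    intro ω
    rw [abs_pow]
    apply pow_le_pow_left₀ (abs_nonneg _)
    exact (hlip (Z 0 ω)).trans (hinnbd ω)
  have hint_sqm : Integrable (fun ω => (m - F (Z 0 ω)) ^ 2) μ := by
    apply integrable_of_abs_le ((measurable_const.sub (hFm.comp (hmeas 0))).pow_const 2)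
      (M ^ 2)
    intro ω
    rw [abs_pow]
    exact pow_le_pow_left₀ (abs_nonneg _) (hbd 0 ω) 2
  have hv1 : ∫ ω, (F (Z 0 ω) - κ) ^ 2 ∂μ ≤ v :=
    integral_mono hint_sqκ hint_inn2 hptsq
  have hdiff : ∫ ω, ((F (Z 0 ω) - κ) ^ 2 - (m - F (Z 0 ω)) ^ 2) ∂μ = (m - κ) ^ 2 := by
    have hre : (fun ω => (F (Z 0 ω) - κ) ^ 2 - (m - F (Z 0 ω)) ^ 2) =
        (fun ω => (2 * m - 2 * κ) * F (Z 0 ω) + (κ ^ 2 - m ^ 2)) := by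
      funext ω; ring
    rw [hre, integral_add ((hXint 0).const_mul _) (integrable_const _),
      MeasureTheory.integral_const_mul, integral_const, hmean 0]
    simp only [probReal_univ, smul_eq_mul, one_mul]
    ring
  have hvar0 : ∫ ω, (m - F (Z 0 ω)) ^ 2 ∂μ ≤ v := by
    have hsub := integral_sub hint_sqκ hint_sqm
    have h2 : ∫ ω, (F (Z 0 ω) - κ) ^ 2 ∂μ - ∫ ω, (m - F (Z 0 ω)) ^ 2 ∂μ
        = (m - κ) ^ 2 := by rw [← hsub]; exact hdiff
    nlinarith [hv1, sq_nonneg (m - κ)]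
  have hvar : ∀ i, ∫ ω, (m - F (Z i ω)) ^ 2 ∂μ ≤ v := by
    intro i
    refine le_of_eq_of_le ?_ hvar0
    exact htransfer (fun z => (m - F z) ^ 2) ((measurable_const.sub hFm).pow_const 2) i
  -- independence
  have hXindep : iIndepFun (fun i ω => F (Z i ω)) μ :=
    hindep.comp (fun _ => F) (fun _ => hFm)
  -- apply the tail bound
  have key := bernstein_tail μ (fun i ω => F (Z i ω)) (fun i => hFm.comp (hmeas i))
    hXindep M v L m hMpos hLpos hv0 N hN hmean hbd hvar
  have hexp : Real.exp (-L) = δ / 2 := by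
    rw [hL, Real.exp_neg, Real.exp_log (by positivity), inv_div]
  have key' : (μ {ω | Real.sqrt (2 / N * v * L) + L / (3 * N) * M <
      m - (N : ℝ)⁻¹ * ∑ i ∈ Finset.range N, F (Z (i + 1) ω)}).toReal ≤ δ / 2 := by
    rw [← hexp]
    exact key
  have := prob_le_of_tail μ
    (fun ω => m - (N : ℝ)⁻¹ * ∑ i ∈ Finset.range N, F (Z (i + 1) ω))
    (Real.sqrt (2 / N * v * L) + L / (3 * N) * M) (δ / 2) (by linarith) key'
  exact this
end

section
/- Let p ≥ 1, w ∈ ℝ^p, b ∈ ℝ, and δ ∈ (0, 1). Let P(+1), P(−1) ≥ 0 with P(+1) + P(−1) = 1, and for each y ∈ {-1, 1} let Z^{(y)}, Z^{(y)}_1, …, Z^{(y)}_{N_y} be i.i.d. random vectors taking values in the unit sphere S^{p-1} of ℝ^p, with the two families independent. Define L_log(y, z) = log(1 + exp(-y(⟨w, z⟩ + b))). Then with probability at least 1 − δ, Σ_{y ∈ {-1,1}} P(y) · E[L_log(y, Z^{(y)})] ≤ Σ_{y ∈ {-1,1}} (P(y)/N_y) Σ_{i=1}^{N_y} L_log(y,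 Z^{(y)}_i) + Σ_{y ∈ {-1,1}} P(y) · (ln(2/δ)/(3N_y)) · log(1 + exp(‖w‖₂ − y·b)) + Σ_{y ∈ {-1,1}} P(y) · sqrt( (2/N_y) · E[⟨w, Z^{(y)} − E[Z^{(y)}]⟩²] · ln(2/δ) ). -/
open scoped RealInnerProductSpace
open MeasureTheory ProbabilityTheory

namespace Stmt10Aux

lemma integrable_of_bdd {Ω : Type*} [MeasurableSpace Ω] {μ : Measure Ω} [IsFiniteMeasure μ]
    {f : Ω → ℝ} {C : ℝ} (hm : Measurable f) (hb : ∀ ω, |f ω| ≤ C) : Integrable f μ :=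
  ⟨hm.aestronglyMeasurable, HasFiniteIntegral.of_bounded (C := C)
    (Filter.Eventually.of_forall fun ω => by simpa [Real.norm_eq_abs] using hb ω)⟩

lemma log1exp_nonneg (x : ℝ) : 0 ≤ Real.log (1 + Real.exp x) :=
  Real.log_nonneg (by linarith [Real.exp_pos x])

lemma log1exp_mono {x y : ℝ} (h : x ≤ y) :
    Real.log (1 + Real.exp x) ≤ Real.log (1 + Real.exp y) :=
  Real.log_le_log (by positivity) (by linarith [Real.exp_le_exp.2 h])

lemma log1exp_lip_le {x y : ℝ} (h : y ≤ x) :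
    Real.log (1 + Real.exp x) - Real.log (1 + Real.exp y) ≤ x - y := by
  have h1 : (0:ℝ) < 1 + Real.exp x := by positivity
  have h2 : (0:ℝ) < 1 + Real.exp y := by positivity
  have h3 : 1 + Real.exp x ≤ Real.exp (x - y) * (1 + Real.exp y) := by
    have he : 1 ≤ Real.exp (x - y) := Real.one_le_exp (by linarith)
    have : Real.exp (x - y) * Real.exp y = Real.exp x := by
      rw [← Real.exp_add]; ring_nf
    nlinarith
  have := Real.log_le_log h1 h3
  rw [Real.log_mul (by positivity) h2.ne', Real.log_exp] at this
  linarith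

lemma log1exp_lip (x y : ℝ) :
    |Real.log (1 + Real.exp x) - Real.log (1 + Real.exp y)| ≤ |x - y| := by
  rcases le_total y x with h | h
  · rw [abs_of_nonneg (by linarith [log1exp_mono h]), abs_of_nonneg (by linarith)]
    exact log1exp_lip_le h
  · rw [abs_of_nonpos (by linarith [log1exp_mono h]), abs_of_nonpos (by linarith)]
    have := log1exp_lip_le h; linarith

lemma two_mul_three_pow_le_factorial (k : ℕ) : 2 * 3 ^ k ≤ (k + 2).factorial := by
  induction k with
  | zero => simp [Nat.factorial]
  | succ n ih =>
      have h1 : (n + 3).factorial = (n + 3) * (n + 2).factorial := rfl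
      calc 2 * 3 ^ (n + 1) = 3 * (2 * 3 ^ n) := by ring
        _ ≤ 3 * (n + 2).factorial := by omega
        _ ≤ (n + 3) * (n + 2).factorial := by
            exact Nat.mul_le_mul_right _ (by omega)
        _ = (n + 3).factorial := h1.symm

/-- Reindexing an independent family along an injective map. -/
lemma iIndepFun_comp_right {Ω ι κ β : Type*} [MeasurableSpace Ω] {μ : Measure Ω}
    [mβ : MeasurableSpace β] {f : ι → Ω → β}
    (h : iIndepFun f μ) {e : κ → ι} (he : Function.Injective e) [Nonempty κ] :
    iIndepFun (fun k => f (e k)) μ := by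
  classical
  rw [iIndepFun_iff_measure_inter_preimage_eq_mul] at h ⊢
  intro S sets hsets
  set r := Function.invFun e with hr
  have hre : ∀ k, r (e k) = k := fun k => Function.leftInverse_invFun he k
  set sets' : ι → Set β := fun i => if i ∈ S.image e then sets (r i) else Set.univ with hs'
  have h1 : ∀ k ∈ S, sets' (e k) = sets k := by
    intro k hk
    simp only [hs', Finset.mem_image_of_mem e hk, if_true, hre]
  have hmeas' : ∀ i ∈ S.image e, MeasurableSet (sets' i) := by
    intro i hi
    obtain ⟨k, hk, rfl⟩ := Finset.mem_image.1 hi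
    rw [h1 k hk]; exact hsets k hk
  have key := h (S.image e) (sets := sets') hmeas'
  have hset_eq : (⋂ i ∈ S.image e, f i ⁻¹' sets' i) = ⋂ k ∈ S, f (e k) ⁻¹' sets k := by
    ext x
    simp only [Set.mem_iInter, Finset.mem_image]
    constructor
    · intro hx k hk
      have := hx (e k) ⟨k, hk, rfl⟩
      rwa [h1 k hk] at this
    · rintro hx i ⟨k, hk, rfl⟩
      rw [h1 k hk]; exact hx k hk
  have hprod : ∏ i ∈ S.image e, μ (f i ⁻¹' sets' i) = ∏ k ∈ S, μ (f (e k) ⁻¹' sets k) := by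
    rw [Finset.prod_image (fun a _ c _ hac => he hac)]
    exact Finset.prod_congr rfl fun k hk => by rw [h1 k hk]
  rw [hset_eq, hprod] at key
  exact key

end Stmt10Aux

namespace Stmt10Aux

open Real

lemma mgf_le_of_bdd {Ω : Type*} [MeasurableSpace Ω] {μ : Measure Ω} [IsProbabilityMeasure μ]
    {Y : Ω → ℝ} (hm : Measurable Y) {c v a : ℝ} (hc : 0 ≤ c) (hb : ∀ ω, |Y ω| ≤ c)
    (hmean : ∫ ω, Y ω ∂μ = 0) (hvar : ∫ ω, (Y ω) ^ 2 ∂μ ≤ v)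
    (ha : 0 ≤ a) (hac : a * c < 3) :
    ∫ ω, Real.exp (a * Y ω) ∂μ ≤ Real.exp (a ^ 2 * v / (2 * (1 - a * c / 3))) := by
  have hv0 : 0 ≤ v := le_trans (integral_nonneg fun ω => sq_nonneg _) hvar
  set q : ℝ := a * c / 3 with hqdef
  have hq0 : 0 ≤ q := by positivity
  have hq1 : q < 1 := by rw [hqdef]; linarith
  set F : ℕ → Ω → ℝ := fun k ω => (a * Y ω) ^ k / k.factorial with hF
  have hfac : ∀ k : ℕ, (0:ℝ) < k.factorial := fun k => by
    exact_mod_cast Nat.cast_pos.2 k.factorial_pos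
  have hFb : ∀ k ω, |F k ω| ≤ (a * c) ^ k / k.factorial := by
    intro k ω
    rw [hF, abs_div, abs_of_nonneg (hfac k).le, abs_pow, abs_mul, abs_of_nonneg ha]
    refine (div_le_div_iff_of_pos_right (hfac k)).2 ?_
    exact pow_le_pow_left₀ (mul_nonneg ha (abs_nonneg _)) (mul_le_mul_of_nonneg_left (hb ω) ha) k
  have hFmeas : ∀ k, Measurable (F k) := fun k => ((hm.const_mul a).pow_const k).div_const _
  have hFint : ∀ k, Integrable (F k) μ := fun k => integrable_of_bdd (hFmeas k) (hFb k)
  have hexp : ∀ ω, Real.exp (a * Y ω) = ∑' k, F k ω := by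
    intro ω
    rw [Real.exp_eq_exp_ℝ, NormedSpace.exp_eq_tsum_div]
  have hsummaj : Summable fun k : ℕ => (a * c) ^ k / (k.factorial : ℝ) :=
    Real.summable_pow_div_factorial (a * c)
  have hswap : ∫ ω, Real.exp (a * Y ω) ∂μ = ∑' k, ∫ ω, F k ω ∂μ := by
    simp_rw [hexp]
    refine integral_tsum (fun k => (hFint k).1) ?_
    have hle : ∀ k : ℕ, ∫⁻ ω, ‖F k ω‖₊ ∂μ ≤ ENNReal.ofReal ((a * c) ^ k / k.factorial) := by
      intro k
      calc ∫⁻ ω, (‖F k ω‖₊ : ENNReal) ∂μ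
          ≤ ∫⁻ _, ENNReal.ofReal ((a * c) ^ k / k.factorial) ∂μ := by
            refine lintegral_mono fun ω => ?_
            rw [← enorm_eq_nnnorm, Real.enorm_eq_ofReal_abs]
            exact ENNReal.ofReal_le_ofReal (hFb k ω)
        _ = ENNReal.ofReal ((a * c) ^ k / k.factorial) := by
            simp [lintegral_const]
    refine ne_of_lt (lt_of_le_of_lt (ENNReal.tsum_le_tsum hle) ?_)
    rw [← ENNReal.ofReal_tsum_of_nonneg (fun k => by positivity) hsummaj]
    exact ENNReal.ofReal_lt_top
  have hIb : ∀ k, |∫ ω, F k ω ∂μ| ≤ (a * c) ^ k / k.factorial := by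
    intro k
    calc |∫ ω, F k ω ∂μ| ≤ ∫ ω, |F k ω| ∂μ := by
          simpa [Real.norm_eq_abs] using norm_integral_le_integral_norm (μ := μ) (F k)
      _ ≤ ∫ _, (a * c) ^ k / (k.factorial : ℝ) ∂μ :=
          integral_mono ((hFint k).abs) (integrable_const _) fun ω => hFb k ω
      _ = (a * c) ^ k / k.factorial := by simp
  have hsumI : Summable fun k => ∫ ω, F k ω ∂μ :=
    Summable.of_norm_bounded hsummaj fun k => by
      simpa [Real.norm_eq_abs] using hIb k
  -- split off first two terms
  have hsplit : ∑' k, ∫ ω, F k ω ∂μ =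
      (∫ ω, F 0 ω ∂μ) + (∫ ω, F 1 ω ∂μ) + ∑' k, ∫ ω, F (k + 2) ω ∂μ := by
    rw [Summable.tsum_eq_zero_add hsumI, Summable.tsum_eq_zero_add ((summable_nat_add_iff 1).2 hsumI),
      ← add_assoc]
  have hI0 : ∫ ω, F 0 ω ∂μ = 1 := by simp [hF]
  have hI1 : ∫ ω, F 1 ω ∂μ = 0 := by
    simp only [hF, pow_one, Nat.factorial_one, Nat.cast_one, div_one]
    rw [MeasureTheory.integral_const_mul, hmean, mul_zero]
  have hYint : Integrable Y μ := integrable_of_bdd hm hb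
  have hY2int : Integrable (fun ω => (Y ω) ^ 2) μ :=
    integrable_of_bdd (hm.pow_const 2) (fun ω => by
      rw [abs_of_nonneg (sq_nonneg _)]
      calc (Y ω) ^ 2 = |Y ω| ^ 2 := (sq_abs _).symm
        _ ≤ c ^ 2 := by gcongr; exact hb ω)
  have htail : ∀ k : ℕ, ∫ ω, F (k + 2) ω ∂μ ≤ a ^ 2 * v / 2 * q ^ k := by
    intro k
    have hpt : ∀ ω, F (k + 2) ω ≤ a ^ (k + 2) * c ^ k / (k + 2).factorial * (Y ω) ^ 2 := by
      intro ω
      rw [hF]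
      have h1 : (a * Y ω) ^ (k + 2) ≤ a ^ (k + 2) * (c ^ k * (Y ω) ^ 2) := by
        calc (a * Y ω) ^ (k + 2) ≤ |(a * Y ω) ^ (k + 2)| := le_abs_self _
          _ = a ^ (k + 2) * (|Y ω| ^ k * (Y ω) ^ 2) := by
              rw [abs_pow, abs_mul, abs_of_nonneg ha, mul_pow, ← sq_abs (Y ω)]; ring
          _ ≤ a ^ (k + 2) * (c ^ k * (Y ω) ^ 2) :=
              mul_le_mul_of_nonneg_left
                (mul_le_mul_of_nonneg_right (pow_le_pow_left₀ (abs_nonneg _) (hb ω) k)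
                  (sq_nonneg _)) (pow_nonneg ha _)
      have e : a ^ (k + 2) * c ^ k / (((k + 2).factorial : ℕ) : ℝ) * Y ω ^ 2 *
          (((k + 2).factorial : ℕ) : ℝ) = a ^ (k + 2) * (c ^ k * Y ω ^ 2) := by
        field_simp
      rw [div_le_iff₀ (hfac _), e]
      exact h1
    calc ∫ ω, F (k + 2) ω ∂μ
        ≤ ∫ ω, a ^ (k + 2) * c ^ k / (k + 2).factorial * (Y ω) ^ 2 ∂μ :=
          integral_mono (hFint _) (hY2int.const_mul _) hpt
      _ = a ^ (k + 2) * c ^ k / (k + 2).factorial * ∫ ω, (Y ω) ^ 2 ∂μ := by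
          rw [MeasureTheory.integral_const_mul]
      _ ≤ a ^ (k + 2) * c ^ k / (k + 2).factorial * v := by
          gcongr
      _ ≤ a ^ 2 * v / 2 * q ^ k := by
          have hfle : (2:ℝ) * 3 ^ k ≤ ((k + 2).factorial : ℝ) := by
            exact_mod_cast two_mul_three_pow_le_factorial k
          have e1 : a ^ (k + 2) * c ^ k / ((k + 2).factorial : ℝ) * v =
              a ^ 2 * v * (a ^ k * c ^ k) / ((k + 2).factorial : ℝ) := by ring
          have e2 : a ^ 2 * v / 2 * q ^ k = a ^ 2 * v * (a ^ k * c ^ k) / (2 * 3 ^ k) := by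
            rw [hqdef, div_pow, mul_pow]; field_simp
          rw [e1, e2]
          exact div_le_div_of_nonneg_left (by positivity) (by positivity) hfle
  -- assemble
  rw [hswap, hsplit, hI0, hI1]
  have hqpos : (0:ℝ) < 1 - q := by linarith
  have htsum : ∑' k, ∫ ω, F (k + 2) ω ∂μ ≤ a ^ 2 * v / 2 * (1 - q)⁻¹ := by
    calc ∑' k, ∫ ω, F (k + 2) ω ∂μ ≤ ∑' k : ℕ, a ^ 2 * v / 2 * q ^ k :=
          Summable.tsum_le_tsum htail ((summable_nat_add_iff 2).2 hsumI)
            ((summable_geometric_of_lt_one hq0 hq1).mul_left _)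
      _ = a ^ 2 * v / 2 * (1 - q)⁻¹ := by
          rw [tsum_mul_left, tsum_geometric_of_lt_one hq0 hq1]
  have heq : a ^ 2 * v / (2 * (1 - a * c / 3)) = a ^ 2 * v / 2 * (1 - q)⁻¹ := by
    rw [hqdef, ← div_div, div_eq_mul_inv]
  have hexp' := Real.add_one_le_exp (a ^ 2 * v / (2 * (1 - a * c / 3)))
  rw [heq] at hexp' ⊢
  linarith

end Stmt10Aux
namespace Stmt10Aux

lemma bernstein_chernoff {Ω : Type*} [MeasurableSpace Ω] {μ : Measure Ω}
    [IsProbabilityMeasure μ] {N : ℕ} (hN : 0 < N) {Y : ℕ → Ω → ℝ}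
    (hmeas : ∀ i, Measurable (Y i))
    (hindep : iIndepFun Y μ)
    {c : ℝ} (hc : 0 ≤ c) (hb : ∀ i ω, |Y i ω| ≤ c)
    (hmean : ∀ i, ∫ ω, Y i ω ∂μ = 0)
    {v : ℝ} (hv : 0 < v) (hvar : ∀ i, ∫ ω, (Y i ω) ^ 2 ∂μ ≤ v)
    {t : ℝ} (ht : 0 < t) :
    μ {ω | (N : ℝ) * (c * t / (3 * N)) + N * Real.sqrt (2 * v * (t / N)) ≤
        ∑ i ∈ Finset.range N, Y i ω} ≤ ENNReal.ofReal (Real.exp (-t)) := by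
  have hNR : (0:ℝ) < N := Nat.cast_pos.2 hN
  set T : ℝ := t / N with hT
  have hTpos : 0 < T := div_pos ht hNR
  set σ : ℝ := Real.sqrt v with hσ
  have hσpos : 0 < σ := Real.sqrt_pos.2 hv
  set R : ℝ := Real.sqrt (2 * T) with hR
  have hRpos : 0 < R := Real.sqrt_pos.2 (by linarith)
  have hR2 : R ^ 2 = 2 * T := Real.sq_sqrt (by linarith)
  have hσ2 : σ ^ 2 = v := Real.sq_sqrt hv.le
  set u : ℝ := R / σ with hu
  have hupos : 0 < u := div_pos hRpos hσpos
  set lam : ℝ := u / (1 + u * (c / 3)) with hlam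
  have hden : 0 < 1 + u * (c / 3) := by positivity
  have hlampos : 0 < lam := div_pos hupos hden
  have hlc : lam * c < 3 := by
    rw [hlam, div_mul_eq_mul_div, div_lt_iff₀ hden]
    nlinarith
  -- sqrt identity
  have hsq : Real.sqrt (2 * v * T) = σ * R := by
    rw [hσ, hR, ← Real.sqrt_mul (by linarith : (0:ℝ) ≤ v) (2 * T)]
    congr 1; ring
  -- the threshold
  set s : ℝ := (N : ℝ) * (c * t / (3 * N)) + N * Real.sqrt (2 * v * (t / N)) with hs
  -- mgf bound for each variable
  have hmgf : ∀ i, mgf (Y i) μ lam ≤ Real.exp (lam ^ 2 * v / (2 * (1 - lam * c / 3))) := by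
    intro i
    exact mgf_le_of_bdd (hmeas i) hc (hb i) (hmean i) (hvar i) hlampos.le hlc
  set D : ℝ := 3 + u * c with hD
  have hDpos : 0 < D := by positivity
  have hlam2 : lam = 3 * u / D := by
    rw [hlam, hD]; field_simp
  have h2 : 1 - lam * c / 3 = 3 / D := by
    rw [hlam2, hD]; field_simp; ring
  have huv : u ^ 2 * v = 2 * T := by
    calc u ^ 2 * v = (R / σ) ^ 2 * σ ^ 2 := by rw [hu, hσ2]
      _ = R ^ 2 := by field_simp
      _ = 2 * T := hR2
  have hσR : σ * R = u * v := by
    rw [hu, ← hσ2]; field_simp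
  -- Chernoff
  have hsum_meas : Measurable (∑ i ∈ Finset.range N, Y i) := by
    have h := Finset.measurable_sum (Finset.range N) (fun (i : ℕ) _ => hmeas i)
    convert h using 1
    ext ω; simp
  have hint_sum : Integrable (fun ω => Real.exp (lam * (∑ i ∈ Finset.range N, Y i) ω)) μ := by
    refine integrable_of_bdd (C := Real.exp (lam * (N * c)))
      (hsum_meas.const_mul lam).exp fun ω => ?_
    rw [abs_of_nonneg (Real.exp_pos _).le]
    refine Real.exp_le_exp.2 (mul_le_mul_of_nonneg_left ?_ hlampos.le)
    calc (∑ i ∈ Finset.range N, Y i) ω = ∑ i ∈ Finset.range N, Y i ω := by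
          simp [Finset.sum_apply]
      _ ≤ ∑ i ∈ Finset.range N, c := Finset.sum_le_sum fun i _ => (abs_le.1 (hb i ω)).2
      _ = N * c := by simp [mul_comm]
  have hch := measure_ge_le_exp_mul_mgf (μ := μ) (X := ∑ i ∈ Finset.range N, Y i) s
    hlampos.le hint_sum
  rw [(hindep.mgf_sum hmeas (Finset.range N))] at hch
  have hprod : ∏ i ∈ Finset.range N, mgf (Y i) μ lam ≤
      Real.exp ((N : ℝ) * (lam ^ 2 * v / (2 * (1 - lam * c / 3)))) := by
    calc ∏ i ∈ Finset.range N, mgf (Y i) μ lam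
        ≤ ∏ i ∈ Finset.range N, Real.exp (lam ^ 2 * v / (2 * (1 - lam * c / 3))) :=
          Finset.prod_le_prod (fun i _ => mgf_nonneg) (fun i _ => hmgf i)
      _ = Real.exp ((N : ℝ) * (lam ^ 2 * v / (2 * (1 - lam * c / 3)))) := by
          rw [Finset.prod_const, ← Real.exp_nat_mul]; simp
  -- the key exponent identity
  have key1 : lam ^ 2 * v / (2 * (1 - lam * c / 3)) = 3 * T / D := by
    rw [h2, hlam2]
    clear_value u D
    field_simp
    linear_combination huv
  have hkey : -lam * s + (N : ℝ) * (lam ^ 2 * v / (2 * (1 - lam * c / 3))) = -t := by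
    rw [key1, hs, hsq, hσR, hlam2, hT]
    have huv2 : (N : ℝ) * (u ^ 2 * v) = 2 * t := by
      rw [huv, hT]; field_simp
    clear_value u D
    field_simp
    linear_combination (-3:ℝ) * huv2 + t * hD
  -- conclude
  have hsetEq : {ω | (N : ℝ) * (c * t / (3 * N)) + N * Real.sqrt (2 * v * (t / N)) ≤
      ∑ i ∈ Finset.range N, Y i ω} = {ω | s ≤ (∑ i ∈ Finset.range N, Y i) ω} := by
    ext ω; simp [hs, hT, Finset.sum_apply]
  rw [hsetEq]
  refine (ENNReal.le_ofReal_iff_toReal_le (measure_ne_top μ _) (Real.exp_pos _).le).2 ?_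
  calc (μ {ω | s ≤ (∑ i ∈ Finset.range N, Y i) ω}).toReal
      ≤ Real.exp (-lam * s) * ∏ i ∈ Finset.range N, mgf (Y i) μ lam := hch
    _ ≤ Real.exp (-lam * s) * Real.exp ((N : ℝ) * (lam ^ 2 * v / (2 * (1 - lam * c / 3)))) :=
        mul_le_mul_of_nonneg_left hprod (Real.exp_pos _).le
    _ = Real.exp (-t) := by rw [← Real.exp_add, hkey]

end Stmt10Aux

namespace Stmt10Aux

lemma bernstein_lt {Ω : Type*} [MeasurableSpace Ω] {μ : Measure Ω}
    [IsProbabilityMeasure μ] {N : ℕ} (hN : 0 < N) {Y : ℕ → Ω → ℝ}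
    (hmeas : ∀ i, Measurable (Y i))
    (hindep : iIndepFun Y μ)
    {c : ℝ} (hc : 0 ≤ c) (hb : ∀ i ω, |Y i ω| ≤ c)
    (hmean : ∀ i, ∫ ω, Y i ω ∂μ = 0)
    {v : ℝ} (hv : 0 ≤ v) (hvar : ∀ i, ∫ ω, (Y i ω) ^ 2 ∂μ ≤ v)
    {t : ℝ} (ht : 0 < t) :
    μ {ω | (N : ℝ) * (c * t / (3 * N)) + N * Real.sqrt (2 * v * (t / N)) <
        ∑ i ∈ Finset.range N, Y i ω} ≤ ENNReal.ofReal (Real.exp (-t)) := by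
  have hNR : (0:ℝ) < N := Nat.cast_pos.2 hN
  have hTpos : (0:ℝ) < t / N := div_pos ht hNR
  have hRpos : (0:ℝ) < Real.sqrt (2 * (t / N)) := Real.sqrt_pos.2 (by linarith)
  -- approximating variances
  set β : ℕ → ℝ := fun n => ((n : ℝ) + 1)⁻¹ / Real.sqrt (2 * (t / N)) with hβ
  have hβpos : ∀ n, 0 < β n := fun n => div_pos (by positivity) hRpos
  set V : ℕ → ℝ := fun n => (Real.sqrt v + β n) ^ 2 with hV
  have hVpos : ∀ n, 0 < V n := fun n => by
    have := Real.sqrt_nonneg v; have := hβpos n; positivity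
  have hvV : ∀ n, v ≤ V n := fun n => by
    have h1 : Real.sqrt v ≤ Real.sqrt v + β n := by linarith [hβpos n]
    calc v = Real.sqrt v ^ 2 := (Real.sq_sqrt hv).symm
      _ ≤ (Real.sqrt v + β n) ^ 2 := by
          have h0 := Real.sqrt_nonneg v
          nlinarith [hβpos n]

  have hsqrtV : ∀ n, Real.sqrt (2 * V n * (t / N)) =
      Real.sqrt (2 * v * (t / N)) + ((n : ℝ) + 1)⁻¹ := by
    intro n
    have e1 : 2 * V n * (t / N) = ((Real.sqrt v + β n) * Real.sqrt (2 * (t / N))) ^ 2 := by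
      rw [hV, mul_pow, Real.sq_sqrt (by linarith : (0:ℝ) ≤ 2 * (t / N))]
      ring
    rw [e1, Real.sqrt_sq (by positivity)]
    rw [add_mul]
    congr 1
    · rw [← Real.sqrt_mul hv]
      congr 1
      ring
    · rw [hβ]
      field_simp
  -- the approximating events
  set S : Ω → ℝ := fun ω => ∑ i ∈ Finset.range N, Y i ω with hS
  set A : ℕ → Set Ω := fun n => {ω | (N : ℝ) * (c * t / (3 * N)) +
      N * Real.sqrt (2 * V n * (t / N)) ≤ S ω} with hA
  have hAbd : ∀ n, μ (A n) ≤ ENNReal.ofReal (Real.exp (-t)) := fun n =>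
    bernstein_chernoff hN hmeas hindep hc hb hmean (hVpos n)
      (fun i => le_trans (hvar i) (hvV n)) ht
  have hAmono : Monotone A := by
    intro n m hnm ω hω
    simp only [hA, Set.mem_setOf_eq] at hω ⊢
    have hinv : ((m : ℝ) + 1)⁻¹ ≤ ((n : ℝ) + 1)⁻¹ := by
      have : ((n : ℝ) + 1) ≤ ((m : ℝ) + 1) := by exact_mod_cast Nat.succ_le_succ hnm
      exact inv_anti₀ (by positivity) this
    rw [hsqrtV m]
    rw [hsqrtV n] at hω
    nlinarith
  have hsub : {ω | (N : ℝ) * (c * t / (3 * N)) + N * Real.sqrt (2 * v * (t / N)) < S ω} ⊆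
      ⋃ n, A n := by
    intro ω hω
    simp only [Set.mem_setOf_eq] at hω
    obtain ⟨n, hn⟩ := exists_nat_one_div_lt (show (0:ℝ) <
      (S ω - ((N : ℝ) * (c * t / (3 * N)) + N * Real.sqrt (2 * v * (t / N)))) / N from
      div_pos (by linarith) hNR)
    refine Set.mem_iUnion.2 ⟨n, ?_⟩
    simp only [hA, Set.mem_setOf_eq]
    rw [hsqrtV n]
    rw [one_div] at hn
    rw [lt_div_iff₀ hNR] at hn
    nlinarith
  calc μ {ω | (N : ℝ) * (c * t / (3 * N)) + N * Real.sqrt (2 * v * (t / N)) < S ω}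
      ≤ μ (⋃ n, A n) := measure_mono hsub
    _ = ⨆ n, μ (A n) := (hAmono.directed_le).measure_iUnion
    _ ≤ ENNReal.ofReal (Real.exp (-t)) := iSup_le hAbd

end Stmt10Aux
namespace Stmt10Aux

open scoped RealInnerProductSpace

lemma class_bound {p : ℕ} (w : EuclideanSpace ℝ (Fin p)) (b y : ℝ) (hy : |y| = 1)
    {Ω : Type*} [MeasurableSpace Ω] {μ : Measure Ω} [IsProbabilityMeasure μ]
    {N : ℕ} (hN : 0 < N) {Z : ℕ → Ω → EuclideanSpace ℝ (Fin p)}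
    (hmeas : ∀ i, Measurable (Z i))
    (hind : iIndepFun (fun i => Z (i + 1)) μ)
    (hident : ∀ i, Measure.map (Z i) μ = Measure.map (Z 0) μ)
    (hsphere : ∀ i ω, ‖Z i ω‖ = 1)
    {t : ℝ} (ht : 0 < t) :
    μ {ω | (N : ℝ)⁻¹ * (∑ i ∈ Finset.range N,
          Real.log (1 + Real.exp (-y * (⟪w, Z (i + 1) ω⟫ + b))))
        + t / (3 * N) * Real.log (1 + Real.exp (‖w‖ - y * b))
        + Real.sqrt ((2 / N) * (∫ ω', ⟪w, Z 0 ω' - ∫ ω'', Z 0 ω'' ∂μ⟫ ^ 2 ∂μ) * t)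
        < ∫ ω', Real.log (1 + Real.exp (-y * (⟪w, Z 0 ω'⟫ + b))) ∂μ}
      ≤ ENNReal.ofReal (Real.exp (-t)) := by
  have hNR : (0:ℝ) < N := Nat.cast_pos.2 hN
  set f : ℝ → ℝ := fun g => Real.log (1 + Real.exp (-y * (g + b))) with hf
  have h1m : Measurable fun g : ℝ => 1 + Real.exp (-y * (g + b)) :=
    ((((measurable_id'.add_const b).const_mul (-y)).exp).const_add 1)
  have hf_meas : Measurable f := Real.measurable_log.comp h1m
  set M : ℝ := Real.log (1 + Real.exp (‖w‖ - y * b)) with hM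
  have hM0 : 0 ≤ M := log1exp_nonneg _
  have hinner_meas : Measurable fun z : EuclideanSpace ℝ (Fin p) => ⟪w, z⟫ :=
    (continuous_const.inner continuous_id).measurable
  set G : ℕ → Ω → ℝ := fun i ω => ⟪w, Z i ω⟫ with hG
  have hG_meas : ∀ i, Measurable (G i) := fun i => hinner_meas.comp (hmeas i)
  have hGb : ∀ i ω, |G i ω| ≤ ‖w‖ := fun i ω => by
    have := abs_real_inner_le_norm w (Z i ω)
    rwa [hsphere i ω, mul_one] at this
  set X : ℕ → Ω → ℝ := fun i ω => f (G i ω) with hX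
  have hX_meas : ∀ i, Measurable (X i) := fun i => hf_meas.comp (hG_meas i)
  have hf_bd : ∀ (g : ℝ), |g| ≤ ‖w‖ → 0 ≤ f g ∧ f g ≤ M := by
    intro g hg
    refine ⟨log1exp_nonneg _, ?_⟩
    rw [hf, hM]
    refine log1exp_mono ?_
    have h1 : -y * (g + b) = -(y * g) - y * b := by ring
    have h2 : -(y * g) ≤ |y * g| := neg_le_abs _
    have h3 : |y * g| = |g| := by rw [abs_mul, hy, one_mul]
    linarith [hg]
  have hXb : ∀ i ω, 0 ≤ X i ω ∧ X i ω ≤ M := fun i ω => hf_bd _ (hGb i ω)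
  have hX_int : ∀ i, Integrable (X i) μ := fun i =>
    integrable_of_bdd (C := M) (hX_meas i) fun ω => by
      rw [abs_of_nonneg (hXb i ω).1]; exact (hXb i ω).2
  set m : ℝ := ∫ ω, X 0 ω ∂μ with hm
  have hφ_meas : Measurable fun z : EuclideanSpace ℝ (Fin p) => f ⟪w, z⟫ :=
    hf_meas.comp hinner_meas
  have hmap : ∀ (i : ℕ) (φ : EuclideanSpace ℝ (Fin p) → ℝ), Measurable φ →
      ∫ ω, φ (Z i ω) ∂μ = ∫ ω, φ (Z 0 ω) ∂μ := by
    intro i φ hφ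
    rw [← integral_map (hmeas i).aemeasurable hφ.aestronglyMeasurable, hident i,
      integral_map (hmeas 0).aemeasurable hφ.aestronglyMeasurable]
  have hXm : ∀ i, ∫ ω, X i ω ∂μ = m := fun i => hmap i (fun z => f ⟪w, z⟫) hφ_meas
  have hm0 : 0 ≤ m := integral_nonneg fun ω => (hXb 0 ω).1
  have hmM : m ≤ M := by
    calc m ≤ ∫ _, M ∂μ := integral_mono (hX_int 0) (integrable_const M)
          fun ω => (hXb 0 ω).2
      _ = M := by simp
  set Yv : ℕ → Ω → ℝ := fun i ω => m - X (i + 1) ω with hYv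
  have hY_meas : ∀ i, Measurable (Yv i) := fun i => measurable_const.sub (hX_meas (i + 1))
  have hYb : ∀ i ω, |Yv i ω| ≤ M := fun i ω => by
    rw [abs_le]
    constructor
    · have := (hXb (i + 1) ω).2; simp only [hYv]; linarith
    · have := (hXb (i + 1) ω).1; simp only [hYv]; linarith
  have hY_mean : ∀ i, ∫ ω, Yv i ω ∂μ = 0 := by
    intro i
    rw [hYv]
    rw [integral_sub (integrable_const m) (hX_int (i + 1))]
    rw [hXm (i + 1)]
    simp
  have hYind : iIndepFun Yv μ := by
    have := hind.comp (fun _ => fun z : EuclideanSpace ℝ (Fin p) => m - f ⟪w, z⟫)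
      (fun _ => measurable_const.sub hφ_meas)
    exact this
  -- variance
  set σ2 : ℝ := ∫ ω', ⟪w, Z 0 ω' - ∫ ω'', Z 0 ω'' ∂μ⟫ ^ 2 ∂μ with hσ2
  have hσ2nn : 0 ≤ σ2 := integral_nonneg fun ω => sq_nonneg _
  have hZ0_int : Integrable (Z 0) μ :=
    ⟨(hmeas 0).aestronglyMeasurable, HasFiniteIntegral.of_bounded (C := 1)
      (Filter.Eventually.of_forall fun ω => le_of_eq (hsphere 0 ω))⟩
  set g0 : ℝ := ⟪w, ∫ ω, Z 0 ω ∂μ⟫ with hg0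
  have hGint : ∀ i, Integrable (G i) μ := fun i =>
    integrable_of_bdd (C := ‖w‖) (hG_meas i) (hGb i)
  have hg0b : |g0| ≤ ‖w‖ := by
    rw [hg0]
    have h1 := abs_real_inner_le_norm w (∫ ω, Z 0 ω ∂μ)
    have h2 : ‖∫ ω, Z 0 ω ∂μ‖ ≤ 1 := by
      calc ‖∫ ω, Z 0 ω ∂μ‖ ≤ ∫ ω, ‖Z 0 ω‖ ∂μ := norm_integral_le_integral_norm _
        _ = 1 := by simp only [hsphere]; simp
    nlinarith [norm_nonneg w]
  have hσ2eq : σ2 = ∫ ω, (G 0 ω - g0) ^ 2 ∂μ := by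
    rw [hσ2]
    refine integral_congr_ae (Filter.Eventually.of_forall fun ω => ?_)
    simp only [inner_sub_right]
    rfl
  -- Lipschitz property of f
  have hf_lip : ∀ g1 g2 : ℝ, |f g1 - f g2| ≤ |g1 - g2| := by
    intro g1 g2
    calc |f g1 - f g2| ≤ |(-y * (g1 + b)) - (-y * (g2 + b))| := log1exp_lip _ _
      _ = |y * (g2 - g1)| := by congr 1; ring
      _ = |y| * |g2 - g1| := abs_mul _ _
      _ = |g1 - g2| := by rw [hy, one_mul, abs_sub_comm]
  have hvar : ∀ i, ∫ ω, (Yv i ω) ^ 2 ∂μ ≤ σ2 := by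
    intro i
    have hstep0 : ∫ ω, (Yv i ω) ^ 2 ∂μ = ∫ ω, (m - X 0 ω) ^ 2 ∂μ := by
      have := hmap (i + 1) (fun z => (m - f ⟪w, z⟫) ^ 2)
        ((measurable_const.sub hφ_meas).pow_const 2)
      exact this
    rw [hstep0]
    set c : ℝ := f g0 with hc
    have hcb : 0 ≤ c ∧ c ≤ M := hf_bd _ hg0b
    have hXmm_int : Integrable (fun ω => X 0 ω - m) μ := (hX_int 0).sub (integrable_const m)
    have hXm2_int : Integrable (fun ω => (X 0 ω - m) ^ 2) μ :=
      integrable_of_bdd (C := M ^ 2) ((hX_meas 0).sub_const m |>.pow_const 2) fun ω => by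
        rw [abs_of_nonneg (sq_nonneg _), ← sq_abs]
        have h1 := (hXb 0 ω).1; have h2 := (hXb 0 ω).2
        have : |X 0 ω - m| ≤ M := by rw [abs_le]; constructor <;> linarith
        gcongr
    have hstep1 : ∫ ω, (m - X 0 ω) ^ 2 ∂μ ≤ ∫ ω, (X 0 ω - c) ^ 2 ∂μ := by
      have hexpand : ∀ ω, (X 0 ω - c) ^ 2 =
          (X 0 ω - m) ^ 2 + (2 * (m - c)) * (X 0 ω - m) + (m - c) ^ 2 := fun ω => by ring
      have hint2 : ∫ ω, (X 0 ω - c) ^ 2 ∂μ =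
          (∫ ω, (X 0 ω - m) ^ 2 ∂μ) + (2 * (m - c)) * (∫ ω, (X 0 ω - m) ∂μ) + (m - c) ^ 2 := by
        have hI0 : Integrable (fun ω => 2 * (m - c) * (X 0 ω - m)) μ :=
          hXmm_int.const_mul _
        have hI1 : Integrable
            (fun ω => (X 0 ω - m) ^ 2 + 2 * (m - c) * (X 0 ω - m)) μ := hXm2_int.add hI0
        rw [integral_congr_ae (Filter.Eventually.of_forall hexpand)]
        rw [integral_add hI1 (integrable_const _)]
        rw [integral_add hXm2_int hI0]
        rw [MeasureTheory.integral_const_mul]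
        simp
      have hzero : ∫ ω, (X 0 ω - m) ∂μ = 0 := by
        rw [integral_sub (hX_int 0) (integrable_const m), ← hm]
        simp
      have heq2 : ∀ ω, (m - X 0 ω) ^ 2 = (X 0 ω - m) ^ 2 := fun ω => by ring
      rw [integral_congr_ae (Filter.Eventually.of_forall heq2), hint2, hzero]
      nlinarith [sq_nonneg (m - c)]
    have hG2_int : Integrable (fun ω => (G 0 ω - g0) ^ 2) μ :=
      integrable_of_bdd (C := (2 * ‖w‖) ^ 2) ((hG_meas 0).sub_const g0 |>.pow_const 2)
        fun ω => by
          rw [abs_of_nonneg (sq_nonneg _), ← sq_abs]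
          have h1 := hGb 0 ω
          have : |G 0 ω - g0| ≤ 2 * ‖w‖ := by
            have := abs_sub_abs_le_abs_sub (G 0 ω) g0
            have h3 := abs_sub (G 0 ω) g0
            calc |G 0 ω - g0| ≤ |G 0 ω| + |g0| := abs_sub _ _
              _ ≤ 2 * ‖w‖ := by linarith
          gcongr
    have hXc2_int : Integrable (fun ω => (X 0 ω - c) ^ 2) μ :=
      integrable_of_bdd (C := M ^ 2) ((hX_meas 0).sub_const c |>.pow_const 2) fun ω => by
        rw [abs_of_nonneg (sq_nonneg _), ← sq_abs]
        have h1 := (hXb 0 ω).1; have h2 := (hXb 0 ω).2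
        have : |X 0 ω - c| ≤ M := by rw [abs_le]; constructor <;> [linarith [hcb.2]; linarith [hcb.1]]
        gcongr
    have hstep2 : ∫ ω, (X 0 ω - c) ^ 2 ∂μ ≤ ∫ ω, (G 0 ω - g0) ^ 2 ∂μ := by
      refine integral_mono hXc2_int hG2_int fun ω => ?_
      have hl := hf_lip (G 0 ω) g0
      calc (X 0 ω - c) ^ 2 = |f (G 0 ω) - f g0| ^ 2 := by rw [sq_abs]
        _ ≤ |G 0 ω - g0| ^ 2 := by gcongr
        _ = (G 0 ω - g0) ^ 2 := sq_abs _
    rw [hσ2eq]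
    exact le_trans hstep1 hstep2
  -- apply Bernstein
  have hbern := bernstein_lt hN hY_meas hYind hM0 hYb hY_mean hσ2nn hvar ht
  refine le_trans (measure_mono ?_) hbern
  intro ω hω
  simp only [Set.mem_setOf_eq] at hω ⊢
  set S : ℝ := ∑ i ∈ Finset.range N, X (i + 1) ω with hSdef
  have hsum : ∑ i ∈ Finset.range N, Yv i ω = N * m - S := by
    rw [hSdef]
    simp only [hYv]
    rw [Finset.sum_sub_distrib, Finset.sum_const, Finset.card_range, nsmul_eq_mul]
  have hsqrt_eq : Real.sqrt (2 * σ2 * (t / N)) = Real.sqrt ((2 / N) * σ2 * t) := by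
    congr 1
    field_simp
  have hω' : (N : ℝ)⁻¹ * S + t / (3 * N) * M + Real.sqrt ((2 / N) * σ2 * t) < m := hω
  rw [hsum, hsqrt_eq]
  have e1 : (N : ℝ) * ((N : ℝ)⁻¹ * S) = S := by field_simp
  have e2 : (N : ℝ) * (M * t / (3 * N)) = N * (t / (3 * N) * M) := by ring
  nlinarith [mul_lt_mul_of_pos_left hω' hNR]

end Stmt10Aux

open Stmt10Aux in
theorem stmt_10 (p : ℕ) (hp : 1 ≤ p) (w : EuclideanSpace ℝ (Fin p)) (b : ℝ)
    (δ : ℝ) (hδ : δ ∈ Set.Ioo (0 : ℝ) 1)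
    (Pp Pm : ℝ) (hPp : 0 ≤ Pp) (hPm : 0 ≤ Pm) (hPsum : Pp + Pm = 1)
    {Ω : Type*} [MeasurableSpace Ω] (μ : Measure Ω) [IsProbabilityMeasure μ]
    (Np Nm : ℕ) (hNp : 0 < Np) (hNm : 0 < Nm)
    (Zp Zm : ℕ → Ω → EuclideanSpace ℝ (Fin p))
    (hmeasp : ∀ i, Measurable (Zp i)) (hmeasm : ∀ i, Measurable (Zm i))
    (hindep : iIndepFun
      (fun k : Bool × ℕ => if k.1 then Zp k.2 else Zm k.2) μ)
    (hidentp : ∀ i, Measure.map (Zp i) μ = Measure.map (Zp 0) μ)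
    (hidentm : ∀ i, Measure.map (Zm i) μ = Measure.map (Zm 0) μ)
    (hspherep : ∀ i ω, ‖Zp i ω‖ = 1) (hspherem : ∀ i ω, ‖Zm i ω‖ = 1) :
    ENNReal.ofReal (1 - δ) ≤
      μ {ω |
        Pp * (∫ ω', Real.log (1 + Real.exp (-(1 : ℝ) * (⟪w, Zp 0 ω'⟫ + b))) ∂μ) +
          Pm * (∫ ω', Real.log (1 + Real.exp (-(-1 : ℝ) * (⟪w, Zm 0 ω'⟫ + b))) ∂μ) ≤
        (Pp / Np * ∑ i ∈ Finset.range Np,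
            Real.log (1 + Real.exp (-(1 : ℝ) * (⟪w, Zp (i + 1) ω⟫ + b))) +
          Pm / Nm * ∑ i ∈ Finset.range Nm,
            Real.log (1 + Real.exp (-(-1 : ℝ) * (⟪w, Zm (i + 1) ω⟫ + b)))) +
        (Pp * (Real.log (2 / δ) / (3 * Np)) *
            Real.log (1 + Real.exp (‖w‖ - (1 : ℝ) * b)) +
          Pm * (Real.log (2 / δ) / (3 * Nm)) *
            Real.log (1 + Real.exp (‖w‖ - (-1 : ℝ) * b))) +
        (Pp * Real.sqrt ((2 / Np) *
              (∫ ω', ⟪w, Zp 0 ω' - ∫ ω'', Zp 0 ω'' ∂μ⟫ ^ 2 ∂μ) * Real.log (2 / δ)) +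
          Pm * Real.sqrt ((2 / Nm) *
              (∫ ω', ⟪w, Zm 0 ω' - ∫ ω'', Zm 0 ω'' ∂μ⟫ ^ 2 ∂μ) * Real.log (2 / δ)))} := by
  obtain ⟨hδ0, hδ1⟩ := hδ
  set t : ℝ := Real.log (2 / δ) with htdef
  have ht : 0 < t := Real.log_pos (by rw [lt_div_iff₀ hδ0]; linarith)
  have hexp_t : Real.exp (-t) = δ / 2 := by
    rw [htdef, ← Real.log_inv, Real.exp_log (by positivity)]
    rw [inv_div]
  -- independence of subfamilies
  have hindp : iIndepFun (fun i => Zp (i + 1)) μ := by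
    have h := iIndepFun_comp_right hindep
      (e := fun i : ℕ => ((true, i + 1) : Bool × ℕ))
      (fun a c hac => by simpa using hac)
    simpa using h
  have hindm : iIndepFun (fun i => Zm (i + 1)) μ := by
    have h := iIndepFun_comp_right hindep
      (e := fun i : ℕ => ((false, i + 1) : Bool × ℕ))
      (fun a c hac => by simpa using hac)
    simpa using h
  -- bad events
  have hbp := class_bound w b 1 (by norm_num) hNp hmeasp hindp hidentp hspherep ht
  have hbm := class_bound w b (-1) (by norm_num) hNm hmeasm hindm hidentm hspherem ht
  rw [hexp_t] at hbp hbm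
  set Bp : Set Ω := {ω | (Np : ℝ)⁻¹ * (∑ i ∈ Finset.range Np,
        Real.log (1 + Real.exp (-(1:ℝ) * (⟪w, Zp (i + 1) ω⟫ + b))))
      + t / (3 * Np) * Real.log (1 + Real.exp (‖w‖ - (1:ℝ) * b))
      + Real.sqrt ((2 / Np) * (∫ ω', ⟪w, Zp 0 ω' - ∫ ω'', Zp 0 ω'' ∂μ⟫ ^ 2 ∂μ) * t)
      < ∫ ω', Real.log (1 + Real.exp (-(1:ℝ) * (⟪w, Zp 0 ω'⟫ + b))) ∂μ} with hBpdef
  set Bm : Set Ω := {ω | (Nm : ℝ)⁻¹ * (∑ i ∈ Finset.range Nm,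
        Real.log (1 + Real.exp (-(-1:ℝ) * (⟪w, Zm (i + 1) ω⟫ + b))))
      + t / (3 * Nm) * Real.log (1 + Real.exp (‖w‖ - (-1:ℝ) * b))
      + Real.sqrt ((2 / Nm) * (∫ ω', ⟪w, Zm 0 ω' - ∫ ω'', Zm 0 ω'' ∂μ⟫ ^ 2 ∂μ) * t)
      < ∫ ω', Real.log (1 + Real.exp (-(-1:ℝ) * (⟪w, Zm 0 ω'⟫ + b))) ∂μ} with hBmdef
  have hbp' : μ Bp ≤ ENNReal.ofReal (δ / 2) := hbp
  have hbm' : μ Bm ≤ ENNReal.ofReal (δ / 2) := hbm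
  -- measurability of bad events
  have hmeas_sump : Measurable fun ω => ∑ i ∈ Finset.range Np,
      Real.log (1 + Real.exp (-(1:ℝ) * (⟪w, Zp (i + 1) ω⟫ + b))) := by
    refine Finset.measurable_sum _ fun i _ => ?_
    have h1 : Measurable fun ω => (⟪w, Zp (i + 1) ω⟫ : ℝ) :=
      (continuous_const.inner continuous_id).measurable.comp (hmeasp (i + 1))
    exact Real.measurable_log.comp
      ((((h1.add_const b).const_mul (-(1:ℝ))).exp).const_add 1)
  have hmeas_summ : Measurable fun ω => ∑ i ∈ Finset.range Nm,
      Real.log (1 + Real.exp (-(-1:ℝ) * (⟪w, Zm (i + 1) ω⟫ + b))) := by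
    refine Finset.measurable_sum _ fun i _ => ?_
    have h1 : Measurable fun ω => (⟪w, Zm (i + 1) ω⟫ : ℝ) :=
      (continuous_const.inner continuous_id).measurable.comp (hmeasm (i + 1))
    exact Real.measurable_log.comp
      ((((h1.add_const b).const_mul (-(-1:ℝ))).exp).const_add 1)
  have hBpmeas : MeasurableSet Bp := by
    rw [hBpdef]
    exact measurableSet_lt
      (((hmeas_sump.const_mul _).add_const _).add_const _) measurable_const
  have hBmmeas : MeasurableSet Bm := by
    rw [hBmdef]
    exact measurableSet_lt
      (((hmeas_summ.const_mul _).add_const _).add_const _) measurable_const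
  -- union bound
  have hunion : μ (Bp ∪ Bm) ≤ ENNReal.ofReal δ := by
    calc μ (Bp ∪ Bm) ≤ μ Bp + μ Bm := measure_union_le _ _
      _ ≤ ENNReal.ofReal (δ / 2) + ENNReal.ofReal (δ / 2) := add_le_add hbp' hbm'
      _ = ENNReal.ofReal δ := by
          rw [← ENNReal.ofReal_add (by positivity) (by positivity)]
          norm_num
  -- good event inclusion
  have hsub : (Bp ∪ Bm)ᶜ ⊆ {ω |
        Pp * (∫ ω', Real.log (1 + Real.exp (-(1 : ℝ) * (⟪w, Zp 0 ω'⟫ + b))) ∂μ) +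
          Pm * (∫ ω', Real.log (1 + Real.exp (-(-1 : ℝ) * (⟪w, Zm 0 ω'⟫ + b))) ∂μ) ≤
        (Pp / Np * ∑ i ∈ Finset.range Np,
            Real.log (1 + Real.exp (-(1 : ℝ) * (⟪w, Zp (i + 1) ω⟫ + b))) +
          Pm / Nm * ∑ i ∈ Finset.range Nm,
            Real.log (1 + Real.exp (-(-1 : ℝ) * (⟪w, Zm (i + 1) ω⟫ + b)))) +
        (Pp * (t / (3 * Np)) *
            Real.log (1 + Real.exp (‖w‖ - (1 : ℝ) * b)) +
          Pm * (t / (3 * Nm)) *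
            Real.log (1 + Real.exp (‖w‖ - (-1 : ℝ) * b))) +
        (Pp * Real.sqrt ((2 / Np) *
              (∫ ω', ⟪w, Zp 0 ω' - ∫ ω'', Zp 0 ω'' ∂μ⟫ ^ 2 ∂μ) * t) +
          Pm * Real.sqrt ((2 / Nm) *
              (∫ ω', ⟪w, Zm 0 ω' - ∫ ω'', Zm 0 ω'' ∂μ⟫ ^ 2 ∂μ) * t))} := by
    intro ω hω
    rw [Set.mem_compl_iff, Set.mem_union] at hω
    push_neg at hω
    obtain ⟨hp1, hm1⟩ := hω
    rw [hBpdef, Set.mem_setOf_eq, not_lt] at hp1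
    rw [hBmdef, Set.mem_setOf_eq, not_lt] at hm1
    rw [Set.mem_setOf_eq]
    have h2p := mul_le_mul_of_nonneg_left hp1 hPp
    have h2m := mul_le_mul_of_nonneg_left hm1 hPm
    have e1 : Pp * ((Np : ℝ)⁻¹ * (∑ i ∈ Finset.range Np,
          Real.log (1 + Real.exp (-(1:ℝ) * (⟪w, Zp (i + 1) ω⟫ + b))))
        + t / (3 * Np) * Real.log (1 + Real.exp (‖w‖ - (1:ℝ) * b))
        + Real.sqrt ((2 / Np) * (∫ ω', ⟪w, Zp 0 ω' - ∫ ω'', Zp 0 ω'' ∂μ⟫ ^ 2 ∂μ) * t)) =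
        Pp / Np * (∑ i ∈ Finset.range Np,
          Real.log (1 + Real.exp (-(1:ℝ) * (⟪w, Zp (i + 1) ω⟫ + b))))
        + Pp * (t / (3 * Np)) * Real.log (1 + Real.exp (‖w‖ - (1:ℝ) * b))
        + Pp * Real.sqrt ((2 / Np) * (∫ ω', ⟪w, Zp 0 ω' - ∫ ω'', Zp 0 ω'' ∂μ⟫ ^ 2 ∂μ) * t) := by
      field_simp
    have e2 : Pm * ((Nm : ℝ)⁻¹ * (∑ i ∈ Finset.range Nm,
          Real.log (1 + Real.exp (-(-1:ℝ) * (⟪w, Zm (i + 1) ω⟫ + b))))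
        + t / (3 * Nm) * Real.log (1 + Real.exp (‖w‖ - (-1:ℝ) * b))
        + Real.sqrt ((2 / Nm) * (∫ ω', ⟪w, Zm 0 ω' - ∫ ω'', Zm 0 ω'' ∂μ⟫ ^ 2 ∂μ) * t)) =
        Pm / Nm * (∑ i ∈ Finset.range Nm,
          Real.log (1 + Real.exp (-(-1:ℝ) * (⟪w, Zm (i + 1) ω⟫ + b))))
        + Pm * (t / (3 * Nm)) * Real.log (1 + Real.exp (‖w‖ - (-1:ℝ) * b))
        + Pm * Real.sqrt ((2 / Nm) * (∫ ω', ⟪w, Zm 0 ω' - ∫ ω'', Zm 0 ω'' ∂μ⟫ ^ 2 ∂μ) * t) := by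
      field_simp
    rw [e1] at h2p
    rw [e2] at h2m
    linarith
  -- conclude
  calc ENNReal.ofReal (1 - δ) = 1 - ENNReal.ofReal δ := by
        rw [← ENNReal.ofReal_one, ← ENNReal.ofReal_sub _ hδ0.le]
    _ ≤ 1 - μ (Bp ∪ Bm) := tsub_le_tsub_left hunion 1
    _ = μ ((Bp ∪ Bm)ᶜ) := (prob_compl_eq_one_sub (hBpmeas.union hBmmeas)).symm
    _ ≤ _ := measure_mono hsub
end
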